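/- arXiv:2008.01489 — 7 statements merged into one kernel-verified Lean document; each statement's English description precedes it below -/
import Mathlib

section
/- (Characterization of no-synchronization zero points, Remark 2.3.) Assume in addition that α > 0 or q < 1. Let z* ∈ [0,1]^N have at least two distinct coordinates. Then F(z*) = 0 if and only if: (i) the quantity c_h := f(z*_h) − z*_h/(1−α−β) takes a common value c for all h = 1,…,N, and (ii) α·(1/N)∑_{i=1}^N z*_i + βq + (1−α−β)c = 0. Moreover, in that case c ∈ (−(α+β)/(1−α−β), 0), and in particular (1−α−β) f(z*_h) < z*_h and (1−α−β) f(z*_h) > z*_h − α − β for every h. -/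
noncomputable section

/-- The drift field of the interacting system. -/
def Fmap (N : ℕ) (α β q : ℝ) (f : ℝ → ℝ) (z : Fin N → ℝ) : Fin N → ℝ :=
  fun h => α * ((N : ℝ)⁻¹ * ∑ i, z i) + β * q + (1 - α - β) * f (z h) - z h

/-- characterization of the no-synchronization zero points of `F`. -/
theorem stmt5 (N : ℕ) (hN : 2 ≤ N) (α β q : ℝ)
    (hα : α ∈ Set.Ico (0 : ℝ) 1) (hβ : β ∈ Set.Ico (0 : ℝ) 1)
    (hαβ : α + β ∈ Set.Ioo (0 : ℝ) 1) (hq : q ∈ Set.Ioc (0 : ℝ) 1)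
    (hextra : 0 < α ∨ q < 1)
    (f : ℝ → ℝ) (hf_mono : StrictMonoOn f (Set.Icc 0 1))
    (hf_maps : ∀ x ∈ Set.Icc (0 : ℝ) 1, f x ∈ Set.Icc (0 : ℝ) 1)
    (hf_smooth : ContDiffOn ℝ 1 f (Set.Icc 0 1))
    (z : Fin N → ℝ) (hz : ∀ h, z h ∈ Set.Icc (0 : ℝ) 1)
    (hdist : ∃ h j, z h ≠ z j) :
    (Fmap N α β q f z = 0 ↔
      ∃ c : ℝ, (∀ h, f (z h) - z h / (1 - α - β) = c) ∧
        α * ((N : ℝ)⁻¹ * ∑ i, z i) + β * q + (1 - α - β) * c = 0) ∧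
    (Fmap N α β q f z = 0 →
      (∀ h, f (z h) - z h / (1 - α - β) ∈ Set.Ioo (-(α + β) / (1 - α - β)) 0) ∧
      (∀ h, (1 - α - β) * f (z h) < z h) ∧
      (∀ h, z h - α - β < (1 - α - β) * f (z h))) := by
  obtain ⟨hα0, hα1⟩ := hα
  obtain ⟨hβ0, hβ1⟩ := hβ
  obtain ⟨hαβ0, hαβ1⟩ := hαβ
  obtain ⟨hq0, hq1⟩ := hq
  have hD : 0 < 1 - α - β := by linarith
  have hD' : (1 - α - β) ≠ 0 := ne_of_gt hD
  obtain ⟨m, hm⟩ : ∃ m : ℝ, m = (N : ℝ)⁻¹ * ∑ i, z i := ⟨_, rfl⟩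
  obtain ⟨S, hSdef⟩ : ∃ S : ℝ, S = α * m + β * q := ⟨_, rfl⟩
  -- bounds on the mean
  obtain ⟨a, b, hab⟩ := hdist
  have hN0 : (0 : ℝ) < N := by positivity
  have hsum_pos : 0 < ∑ i, z i := by
    apply Finset.sum_pos'
    · exact fun i _ => (hz i).1
    · rcases lt_or_gt_of_ne hab with h | h
      · exact ⟨b, Finset.mem_univ b, lt_of_le_of_lt (hz a).1 h⟩
      · exact ⟨a, Finset.mem_univ a, lt_of_le_of_lt (hz b).1 h⟩
  have hsum_lt : (∑ i, z i) < N := by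
    have : (∑ i, z i) < ∑ _i : Fin N, (1 : ℝ) := by
      apply Finset.sum_lt_sum (fun i _ => (hz i).2)
      rcases lt_or_gt_of_ne hab with h | h
      · exact ⟨a, Finset.mem_univ a, lt_of_lt_of_le h (hz b).2⟩
      · exact ⟨b, Finset.mem_univ b, lt_of_lt_of_le h (hz a).2⟩
    simpa using this
  have hm0 : 0 < m := by
    rw [hm]; positivity
  have hm1 : m < 1 := by
    rw [hm, inv_mul_eq_div]
    exact (div_lt_one hN0).mpr hsum_lt
  -- bounds on S
  have hS_pos : 0 < S := by
    rcases eq_or_lt_of_le hα0 with h | h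
    · have hβpos : 0 < β := by linarith
      have : 0 < β * q := mul_pos hβpos hq0
      nlinarith
    · nlinarith [mul_pos h hm0, mul_nonneg hβ0 hq0.le]
  have hS_lt : S < α + β := by
    rcases hextra with h | h
    · have h1 : α * m < α := by nlinarith
      have h2 : β * q ≤ β := by nlinarith
      linarith
    · rcases eq_or_lt_of_le hβ0 with hb | hb
      · have hαpos : 0 < α := by linarith
        have h1 : α * m < α := by nlinarith
        nlinarith
      · have h1 : α * m ≤ α := by nlinarith
        have h2 : β * q < β := by nlinarith
        linarith
  have key : ∀ (hF : Fmap N α β q f z = 0) (h : Fin N),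
      (1 - α - β) * f (z h) = z h - S := by
    intro hF h
    have := congrFun hF h
    simp only [Fmap, Pi.zero_apply] at this
    rw [hSdef, hm]
    linarith
  constructor
  · constructor
    · intro hF
      refine ⟨-S / (1 - α - β), fun h => ?_, ?_⟩
      · have hk := key hF h
        field_simp
        linarith
      · rw [hSdef, hm] at *
        field_simp
        ring
    · rintro ⟨c, hc, hsum⟩
      funext h
      have hch := hc h
      have hfz : f (z h) = c + z h / (1 - α - β) := by linarith
      simp only [Fmap, Pi.zero_apply]
      rw [hfz, mul_add, mul_div_cancel₀ _ hD']
      linarith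
  · intro hF
    have h1 : ∀ h, (1 - α - β) * f (z h) < z h := by
      intro h; have := key hF h; linarith
    have h2 : ∀ h, z h - α - β < (1 - α - β) * f (z h) := by
      intro h; have := key hF h; linarith
    refine ⟨fun h => ?_, h1, h2⟩
    have hk := key hF h
    have hc : f (z h) - z h / (1 - α - β) = -S / (1 - α - β) := by
      field_simp
      linarith
    rw [Set.mem_Ioo, hc]
    constructor
    · rw [div_lt_div_iff₀ hD hD]
      nlinarith [mul_lt_mul_of_pos_right hS_lt hD]
    · exact div_neg_of_neg_of_pos (by linarith) hD

end
end

section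
/- (Theorem 3.1, case f = f_LP with β > 0: predictability.) Let f = f_LP and assume β > 0. Let ẑ be the unique root in (0,1) of the quadratic equation (1−α)θ z² + [(1−α)θx* − βθq − (1−α−β)] z − βqθx* = 0. Then (Z_{n,1},…,Z_{n,N}) converges almost surely to ẑ·(1,…,1), and the empirical means (1/n)∑_{k=1}^n (I_{k,1},…,I_{k,N}) converge almost surely to ẑ·(1,…,1); in particular the system almost surely asymptotically synchronizes and is predictable. -/
open MeasureTheory ProbabilityTheory Filter

noncomputable section

/-- The zero set of `Fmap` inside the cube `[0,1]^N`. -/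
def ZeroSet (N : ℕ) (α β q : ℝ) (f : ℝ → ℝ) : Set (Fin N → ℝ) :=
  {z | (∀ h, z h ∈ Set.Icc (0 : ℝ) 1) ∧ Fmap N α β q f z = 0}

/-- The interacting system of `N` reinforced stochastic processes: `Z_{0,h}` is
`ℱ_0`-measurable with values in `[0,1]`; the `{0,1}`-valued `I_{n+1,h}` are
`ℱ_{n+1}`-measurable and conditionally independent given `ℱ_n`, with
`P(I_{n+1,h} = 1 | ℱ_n) = α·Z̄_n + βq + (1−α−β)f(Z_{n,h})`; and
`Z_{n+1,h} = (1−r_n) Z_{n,h} + r_n I_{n+1,h}` with `r_n ∈ (0,1]`, `n·r_n → 1`. -/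
structure InteractingSystem (N : ℕ) (α β q : ℝ) (f : ℝ → ℝ)
    (Ω : Type*) [mΩ : MeasurableSpace Ω] [StandardBorelSpace Ω] [Nonempty Ω]
    (μ : Measure Ω) [IsProbabilityMeasure μ] where
  ℱ : Filtration ℕ mΩ
  Z : ℕ → Fin N → Ω → ℝ
  I : ℕ → Fin N → Ω → ℝ
  r : ℕ → ℝ
  r_mem : ∀ n, r n ∈ Set.Ioc (0 : ℝ) 1
  r_lim : Tendsto (fun n : ℕ => (n : ℝ) * r n) atTop (nhds 1)
  Z0_meas : ∀ h, Measurable[ℱ 0] (Z 0 h)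
  Z0_mem : ∀ h ω, Z 0 h ω ∈ Set.Icc (0 : ℝ) 1
  I_meas : ∀ n h, Measurable[ℱ (n + 1)] (I (n + 1) h)
  I_val : ∀ n h ω, I (n + 1) h ω = 0 ∨ I (n + 1) h ω = 1
  condIndep : ∀ n,
    iCondIndepFun (ℱ n) (ℱ.le n) (m := fun _ : Fin N => (inferInstance : MeasurableSpace ℝ))
      (fun h => I (n + 1) h) μ
  condProb : ∀ n h,
    μ[I (n + 1) h | ℱ n] =ᵐ[μ]
      fun ω => α * ((N : ℝ)⁻¹ * ∑ i, Z n i ω) + β * q + (1 - α - β) * f (Z n h ω)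
  Z_rec : ∀ n h ω, Z (n + 1) h ω = (1 - r n) * Z n h ω + r n * I (n + 1) h ω

/-- The Linear Probability function `f_LP(x) = x/(θ(x+x*))`. -/
def fLP (θ xs x : ℝ) : ℝ := x / (θ * (x + xs))

/-- The quadratic whose roots give the synchronization zero points for `f = f_LP`. -/
def quadLP (α β q θ xs z : ℝ) : ℝ :=
  (1 - α) * θ * z ^ 2 + ((1 - α) * θ * xs - β * θ * q - (1 - α - β)) * z - β * q * θ * xs

theorem hfix {α β q θ xs zhat : ℝ} (hθ : 0 < θ) (hxs : 0 < xs) (hz0 : 0 < zhat)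
    (hroot : quadLP α β q θ xs zhat = 0) :
    (1 - α) * zhat = β * q + (1 - α - β) * fLP θ xs zhat := by
  have hD : (0:ℝ) < θ * (zhat + xs) := by positivity
  rw [show fLP θ xs zhat = zhat / (θ * (zhat + xs)) from rfl]
  rw [quadLP] at hroot
  field_simp
  nlinarith [hroot]

theorem secant {θ xs zhat : ℝ} (hθ : 0 < θ) (hxs : 0 < xs) (hz0 : 0 ≤ zhat)
    (x : ℝ) (hx0 : 0 ≤ x) :
    (x - zhat) * (fLP θ xs x - fLP θ xs zhat)
      ≤ (x - zhat)^2 * (1 / (θ * (zhat + xs))) := by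
  have h1 : (0:ℝ) < θ * (x + xs) := by positivity
  have h2 : (0:ℝ) < θ * (zhat + xs) := by positivity
  have hzxs : (0:ℝ) < zhat + xs := by positivity
  have key : fLP θ xs x - fLP θ xs zhat
      = (x - zhat) * (xs / ((θ * (x + xs)) * (zhat + xs))) := by
    rw [fLP, fLP]
    field_simp
    ring
  rw [key, ← mul_assoc, ← sq]
  refine mul_le_mul_of_nonneg_left ?_ (sq_nonneg _)
  rw [div_le_div_iff₀ (by positivity) (by positivity)]
  nlinarith

theorem drift {α β q θ xs zhat : ℝ} (hθ : 0 < θ) (hxs : 0 < xs) (hz0 : 0 < zhat)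
    (hα : 0 ≤ α) (hαβ : α + β < 1)
    (hfixpt : (1 - α) * zhat = β * q + (1 - α - β) * fLP θ xs zhat)
    (N : ℕ) (hN : 1 ≤ N) (z : Fin N → ℝ) (hz : ∀ h, 0 ≤ z h) :
    ∑ h, (z h - zhat) *
        ((α * ((N:ℝ)⁻¹ * ∑ i, z i) + β * q + (1 - α - β) * fLP θ xs (z h)) - zhat)
      ≤ (1 - β * q / zhat) * ∑ h, (z h - zhat) ^ 2 := by
  have hNr : (0:ℝ) < (N:ℝ) := by exact_mod_cast hN
  have hD : (0:ℝ) < θ * (zhat + xs) := by positivity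
  set Dinv := 1 / (θ * (zhat + xs)) with hDinv
  have hDinv0 : 0 < Dinv := by positivity
  have hfz : fLP θ xs zhat = zhat * Dinv := by
    rw [fLP, hDinv]; field_simp
  have hrho : α + (1 - α - β) * Dinv = 1 - β * q / zhat := by
    rw [hfz] at hfixpt
    field_simp
    nlinarith [hfixpt]
  set S := ∑ h, (z h - zhat) with hSdef
  set V := ∑ h, (z h - zhat) ^ 2 with hVdef
  have hfix' : zhat = α * zhat + β * q + (1 - α - β) * fLP θ xs zhat := by linarith
  have hS : (N:ℝ)⁻¹ * (∑ i, z i) - zhat = (N:ℝ)⁻¹ * S := by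
    rw [hSdef, Finset.sum_sub_distrib, Finset.sum_const, Finset.card_univ, Fintype.card_fin, nsmul_eq_mul]
    field_simp
  have expand : ∀ h : Fin N, (z h - zhat) *
      ((α * ((N:ℝ)⁻¹ * ∑ i, z i) + β * q + (1 - α - β) * fLP θ xs (z h)) - zhat)
      = α * ((N:ℝ)⁻¹ * S) * (z h - zhat)
        + (1 - α - β) * ((z h - zhat) * (fLP θ xs (z h) - fLP θ xs zhat)) := by
    intro h
    have : (α * ((N:ℝ)⁻¹ * ∑ i, z i) + β * q + (1 - α - β) * fLP θ xs (z h)) - zhat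
        = α * ((N:ℝ)⁻¹ * S) + (1 - α - β) * (fLP θ xs (z h) - fLP θ xs zhat) := by
      rw [← hS]; linarith [hfix']
    rw [this]; ring
  have hCS : S ^ 2 ≤ (N:ℝ) * V := by
    rw [hSdef, hVdef]
    have := sq_sum_le_card_mul_sum_sq (s := (Finset.univ : Finset (Fin N)))
      (f := fun h => z h - zhat)
    simpa [Finset.card_univ] using this
  have hV0 : 0 ≤ V := Finset.sum_nonneg fun h _ => sq_nonneg _
  calc ∑ h, (z h - zhat) *
        ((α * ((N:ℝ)⁻¹ * ∑ i, z i) + β * q + (1 - α - β) * fLP θ xs (z h)) - zhat)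
      = α * ((N:ℝ)⁻¹ * S * S)
        + (1 - α - β) * ∑ h, (z h - zhat) * (fLP θ xs (z h) - fLP θ xs zhat) := by
        rw [Finset.sum_congr rfl fun h _ => expand h, Finset.sum_add_distrib,
          ← Finset.mul_sum, ← Finset.mul_sum, ← hSdef]
        ring
    _ ≤ α * V + (1 - α - β) * (V * Dinv) := by
        refine add_le_add ?_ ?_
        · have h1 : (N:ℝ)⁻¹ * S * S = (N:ℝ)⁻¹ * S ^ 2 := by ring
          rw [h1]
          refine mul_le_mul_of_nonneg_left ?_ hα
          rw [inv_mul_le_iff₀ hNr]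
          linarith [hCS]
        · refine mul_le_mul_of_nonneg_left ?_ (by linarith)
          rw [hVdef, Finset.sum_mul]
          exact Finset.sum_le_sum fun h _ =>
            (by simpa [hDinv] using secant hθ hxs hz0.le (z h) (hz h))
    _ = (α + (1 - α - β) * Dinv) * V := by ring
    _ = (1 - β * q / zhat) * V := by rw [hrho]

section Rlems
variable {r : ℕ → ℝ} (hr : ∀ n, r n ∈ Set.Ioc (0:ℝ) 1)
  (hlim : Tendsto (fun n : ℕ => (n : ℝ) * r n) atTop (nhds 1))

include hr hlim

theorem r_to_zero : Tendsto r atTop (nhds 0) := by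
  have h1 : Tendsto (fun n : ℕ => ((n : ℝ) * r n) * (n : ℝ)⁻¹) atTop (nhds (1 * 0)) :=
    hlim.mul tendsto_inv_atTop_nhds_zero_nat
  rw [one_mul] at h1
  refine h1.congr' ?_
  filter_upwards [eventually_ge_atTop 1] with n hn
  have : (n : ℝ) ≠ 0 := Nat.cast_ne_zero.mpr (by omega)
  field_simp

theorem r_succ_lim : Tendsto (fun n : ℕ => ((n : ℝ) + 1) * r n) atTop (nhds 1) := by
  have := hlim.add (r_to_zero hr hlim)
  rw [add_zero] at this
  refine this.congr fun n => by ring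

theorem r_sq_summable : Summable (fun n => r n ^ 2) := by
  refine summable_of_isBigO_nat (g := fun n : ℕ => 1 / (n:ℝ)^2)
    (Real.summable_one_div_nat_pow.mpr one_lt_two) ?_
  refine Asymptotics.IsBigO.of_bound 4 ?_
  have h2 : ∀ᶠ n : ℕ in atTop, (n : ℝ) * r n ≤ 2 := by
    filter_upwards [hlim.eventually (eventually_le_nhds (by norm_num : (1:ℝ) < 2))] with n hn
    exact hn
  filter_upwards [h2, eventually_ge_atTop 1] with n hn hn1
  have hnr : (1:ℝ) ≤ (n:ℝ) := by exact_mod_cast hn1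
  have hr0 := (hr n).1
  have hrn : r n ≤ 2 / (n:ℝ) := by
    rw [le_div_iff₀ (by linarith)]
    linarith [hn]
  have : r n ^ 2 ≤ 4 / (n:ℝ)^2 := by
    have := mul_le_mul hrn hrn hr0.le (by positivity)
    calc r n ^2 = r n * r n := sq _
    _ ≤ 2/(n:ℝ) * (2/(n:ℝ)) := this
    _ = 4 / (n:ℝ)^2 := by field_simp; ring
  rw [Real.norm_eq_abs, Real.norm_eq_abs, abs_of_nonneg (by positivity),
    abs_of_nonneg (by positivity)]
  calc r n ^ 2 ≤ 4 / (n:ℝ)^2 := this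
  _ = 4 * (1/(n:ℝ)^2) := by ring

theorem r_sum_div : Tendsto (fun n => ∑ k ∈ Finset.range n, r k) atTop atTop := by
  obtain ⟨K, hK⟩ := (eventually_atTop).1
    (hlim.eventually (eventually_ge_nhds (by norm_num : (1:ℝ)/2 < 1)))
  set H : ℕ → ℝ := fun n => ∑ i ∈ Finset.range n, (1 / ((i:ℝ) + 1)) with hH
  have hrlow : ∀ k, K ≤ k → (1/2) * (1 / ((k:ℝ)+1)) ≤ r k := by
    intro k hk
    have h1 := hK k hk
    have h2 := (hr k).1
    have hk1 : (0:ℝ) < (k:ℝ) + 1 := by positivity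
    rw [show (1:ℝ)/2 * (1/((k:ℝ)+1)) = (1/2)/((k:ℝ)+1) from by ring, div_le_iff₀ hk1]
    nlinarith
  have key : ∀ n, (1/2) * H n - (1/2) * H K ≤ ∑ k ∈ Finset.range n, r k := by
    intro n
    rcases le_or_gt n K with h | h
    · have h1 : H n ≤ H K := Finset.sum_le_sum_of_subset_of_nonneg
        (Finset.range_subset_range.mpr h) (fun k _ _ => by positivity)
      have h2 : 0 ≤ ∑ k ∈ Finset.range n, r k :=
        Finset.sum_nonneg fun k _ => (hr k).1.le
      linarith
    · obtain ⟨m, rfl⟩ : ∃ m, n = K + m := ⟨n - K, by omega⟩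
      simp only [hH]
      rw [Finset.sum_range_add, Finset.sum_range_add]
      have h0 : 0 ≤ ∑ k ∈ Finset.range K, r k := Finset.sum_nonneg fun k _ => (hr k).1.le
      have h1 : (1/2) * ∑ i ∈ Finset.range m, ((1:ℝ)/((↑(K+i):ℝ)+1))
          ≤ ∑ i ∈ Finset.range m, r (K+i) := by
        rw [Finset.mul_sum]
        exact Finset.sum_le_sum fun i _ => hrlow (K+i) (Nat.le_add_right _ _)
      linarith
  refine tendsto_atTop_mono key ?_
  have h3 : Tendsto (fun n => (1/2) * H n) atTop atTop :=
    Tendsto.const_mul_atTop (by norm_num) Real.tendsto_sum_range_one_div_nat_succ_atTop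
  exact tendsto_atTop_add_const_right atTop _ h3
end Rlems

theorem e_to_zero {e r : ℕ → ℝ} {c C : ℝ} (hc : 0 < c) (hC : 0 ≤ C)
    (he0 : ∀ n, 0 ≤ e n) (hr0 : ∀ n, 0 < r n)
    (hrz : Tendsto r atTop (nhds 0))
    (hrdiv : Tendsto (fun n => ∑ k ∈ Finset.range n, r k) atTop atTop)
    (hrec : ∀ n, e (n+1) ≤ (1 - c * r n) * e n + C * r n ^ 2) :
    Tendsto e atTop (nhds 0) := by
  rw [Metric.tendsto_atTop]
  intro ε hε
  have hev : ∀ᶠ n in atTop, c * r n ≤ 1 ∧ C * r n ≤ c * (ε/4) := by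
    have h1 : Tendsto (fun n => c * r n) atTop (nhds 0) := by
      simpa using hrz.const_mul c
    have h2 : Tendsto (fun n => C * r n) atTop (nhds 0) := by
      simpa using hrz.const_mul C
    filter_upwards [h1.eventually (eventually_le_nhds (by norm_num : (0:ℝ) < 1)),
      h2.eventually (eventually_le_nhds (by positivity : (0:ℝ) < c * (ε/4)))] with n hn1 hn2
    exact ⟨hn1, hn2⟩
  obtain ⟨M, hM⟩ := eventually_atTop.1 hev
  set d : ℕ → ℝ := fun n => max (e n - ε/2) 0 with hd
  have hd0 : ∀ n, 0 ≤ d n := fun n => le_max_right _ _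
  have hstep : ∀ n, M ≤ n → d (n+1) ≤ (1 - c * r n) * d n := by
    intro n hn
    have h1 : 0 ≤ 1 - c * r n := by linarith [(hM n hn).1]
    rcases le_or_gt (e (n+1)) (ε/2) with h | h
    · have hz : d (n+1) = 0 := max_eq_right (by simp; linarith)
      rw [hz]
      exact mul_nonneg h1 (hd0 n)
    · have hdn1 : d (n+1) = e (n+1) - ε/2 := max_eq_left (by simp; linarith)
      have hdge : e n - ε/2 ≤ d n := le_max_left _ _
      have h2 : C * r n ^ 2 ≤ c * (ε/4) * r n := by
        have h3 := (hM n hn).2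
        have h4 := hr0 n
        nlinarith
      have h3 : e (n+1) - ε/2 ≤ (1 - c * r n) * (e n - ε/2) := by
        have h5 := hrec n
        have h6 := hr0 n
        nlinarith
      calc d (n+1) = e (n+1) - ε/2 := hdn1
        _ ≤ (1 - c * r n) * (e n - ε/2) := h3
        _ ≤ (1 - c * r n) * d n := mul_le_mul_of_nonneg_left hdge h1
  have hiter : ∀ k, d (M + k) ≤ d M * Real.exp (-c * ∑ j ∈ Finset.range k, r (M + j)) := by
    intro k
    induction k with
    | zero => simp
    | succ k ih =>
      have h1 : 0 ≤ 1 - c * r (M + k) := by linarith [(hM (M+k) (Nat.le_add_right _ _)).1]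
      have h2 : 1 - c * r (M + k) ≤ Real.exp (-(c * r (M + k))) := by
        have := Real.add_one_le_exp (-(c * r (M + k)))
        linarith
      calc d (M + (k+1)) = d ((M + k) + 1) := by ring_nf
        _ ≤ (1 - c * r (M + k)) * d (M + k) := hstep _ (Nat.le_add_right _ _)
        _ ≤ Real.exp (-(c * r (M + k))) * (d M * Real.exp (-c * ∑ j ∈ Finset.range k, r (M + j))) := by
            refine mul_le_mul h2 ih (hd0 _) (Real.exp_nonneg _)
        _ = d M * Real.exp (-c * ∑ j ∈ Finset.range (k+1), r (M + j)) := by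
            rw [Finset.sum_range_succ, show -c * (∑ j ∈ Finset.range k, r (M + j) + r (M+k))
              = -(c * r (M+k)) + -c * ∑ j ∈ Finset.range k, r (M + j) from by ring,
              Real.exp_add]
            ring
  have hA : Tendsto (fun k => ∑ j ∈ Finset.range k, r (M + j)) atTop atTop := by
    have heq : ∀ k, ∑ j ∈ Finset.range k, r (M + j)
        = (∑ i ∈ Finset.range (M + k), r i) - ∑ i ∈ Finset.range M, r i := fun k => by
      rw [Finset.sum_range_add]; ring
    rw [funext heq]
    refine tendsto_atTop_add_const_right _ _ ?_
    have := hrdiv.comp (tendsto_add_atTop_nat M)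
    refine this.congr fun k => by simp [Nat.add_comm]
  have hB : Tendsto (fun k => -c * ∑ j ∈ Finset.range k, r (M + j)) atTop atBot :=
    (tendsto_const_mul_atBot_of_neg (by linarith)).2 hA
  have hexp : Tendsto (fun k => Real.exp (-c * ∑ j ∈ Finset.range k, r (M + j))) atTop (nhds 0) :=
    Real.tendsto_exp_atBot.comp hB
  have hlim2 : Tendsto (fun k => d M * Real.exp (-c * ∑ j ∈ Finset.range k, r (M + j)))
      atTop (nhds 0) := by
    simpa using hexp.const_mul (d M)
  have hdlim : Tendsto (fun k => d (M + k)) atTop (nhds 0) :=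
    squeeze_zero (fun k => hd0 _) hiter hlim2
  obtain ⟨K, hK⟩ := (Metric.tendsto_atTop.1 hdlim) (ε/2) (by linarith)
  refine ⟨M + K, fun n hn => ?_⟩
  have h1 := hK (n - M) (by omega)
  rw [show M + (n - M) = n by omega] at h1
  rw [Real.dist_eq, sub_zero, abs_of_nonneg (hd0 _)] at h1
  have h2 : e n - ε/2 ≤ d n := le_max_left _ _
  rw [Real.dist_eq, sub_zero, abs_of_nonneg (he0 n)]
  linarith


theorem condexp_helper {Ω : Type*} [mΩ : MeasurableSpace Ω] {μ : Measure Ω} [IsProbabilityMeasure μ]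
    (m : MeasurableSpace Ω) (hm : m ≤ mΩ)
    (N : ℕ) (A : Ω → ℝ) (cf : Fin N → Ω → ℝ) (I g : Fin N → Ω → ℝ)
    (hA : Integrable A μ) (hAm : StronglyMeasurable[m] A)
    (hcfm : ∀ h, StronglyMeasurable[m] (cf h))
    (hI : ∀ h, Integrable (I h) μ) (hcfI : ∀ h, Integrable (fun ω => cf h ω * I h ω) μ)
    (hg : ∀ h, μ[I h|m] =ᵐ[μ] g h) :
    μ[fun ω => A ω + ∑ h, cf h ω * I h ω | m] =ᵐ[μ]
      fun ω => A ω + ∑ h, cf h ω * g h ω := by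
  have hsum : Integrable (fun ω => ∑ h, cf h ω * I h ω) μ := by
    have := integrable_finset_sum (μ := μ) (s := Finset.univ) (f := fun h ω => cf h ω * I h ω)
      (fun h _ => hcfI h)
    simpa using this
  have h1 : μ[fun ω => A ω + ∑ h, cf h ω * I h ω | m]
      =ᵐ[μ] μ[A|m] + μ[fun ω => ∑ h, cf h ω * I h ω|m] := condExp_add hA hsum m
  have h2 : μ[A|m] =ᵐ[μ] A := by
    rw [condExp_of_stronglyMeasurable hm hAm hA]
  have h3 : μ[fun ω => ∑ h, cf h ω * I h ω|m]
      =ᵐ[μ] ∑ h, μ[fun ω => cf h ω * I h ω|m] := by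
    have heq : (fun ω => ∑ h, cf h ω * I h ω) = ∑ h, fun ω => cf h ω * I h ω := by
      funext ω; simp
    rw [heq]
    exact condExp_finset_sum (fun h _ => hcfI h) m
  have h4 : ∀ h : Fin N, μ[fun ω => cf h ω * I h ω|m] =ᵐ[μ] fun ω => cf h ω * g h ω := by
    intro h
    have p1 : μ[fun ω => cf h ω * I h ω|m] =ᵐ[μ] fun ω => cf h ω * (μ[I h|m]) ω :=
      condExp_mul_of_stronglyMeasurable_left (hcfm h) (hcfI h) (hI h)
    refine p1.trans ?_
    filter_upwards [hg h] with ω hω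
    rw [hω]
  calc μ[fun ω => A ω + ∑ h, cf h ω * I h ω | m]
      =ᵐ[μ] μ[A|m] + μ[fun ω => ∑ h, cf h ω * I h ω|m] := h1
    _ =ᵐ[μ] fun ω => A ω + ∑ h, cf h ω * g h ω := by
        have h5 : (∑ h, μ[fun ω => cf h ω * I h ω|m]) =ᵐ[μ] fun ω => ∑ h, cf h ω * g h ω := by
          have h6 := eventuallyEq_sum (s := (Finset.univ : Finset (Fin N))) (fun h _ => h4 h)
          refine h6.trans (Filter.EventuallyEq.of_eq ?_)
          funext ω; simp
        filter_upwards [h2, h3.trans h5] with ω hω2 hω3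
        simp only [Pi.add_apply, hω2, hω3]


section Stoch
variable {Ω : Type*} [mΩ : MeasurableSpace Ω] [StandardBorelSpace Ω] [Nonempty Ω]
  {μ : Measure Ω} [IsProbabilityMeasure μ]
  {N : ℕ} {α β q θ xs : ℝ}
  (S : InteractingSystem N α β q (fLP θ xs) Ω μ)

theorem I_mem : ∀ n h ω, S.I (n+1) h ω ∈ Set.Icc (0:ℝ) 1 := by
  intro n h ω
  rcases S.I_val n h ω with h' | h' <;> rw [h'] <;> constructor <;> norm_num

theorem Z_mem : ∀ n h ω, S.Z n h ω ∈ Set.Icc (0:ℝ) 1 := by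
  intro n
  induction n with
  | zero => exact S.Z0_mem
  | succ n ih =>
    intro h ω
    rw [S.Z_rec]
    obtain ⟨hr0, hr1⟩ := S.r_mem n
    obtain ⟨a1, a2⟩ := ih h ω
    obtain ⟨b1, b2⟩ := I_mem S n h ω
    constructor
    · nlinarith
    · nlinarith

theorem Z_meas : ∀ n h, Measurable[S.ℱ n] (S.Z n h) := by
  intro n
  induction n with
  | zero => exact S.Z0_meas
  | succ n ih =>
    intro h
    have heq : S.Z (n+1) h = fun ω => (1 - S.r n) * S.Z n h ω + S.r n * S.I (n+1) h ω :=
      funext (S.Z_rec n h)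
    rw [heq]
    exact (((ih h).mono (S.ℱ.mono (Nat.le_succ n)) le_rfl).const_mul _).add
      ((S.I_meas n h).const_mul _)

theorem fLP_meas (hθ : 0 < θ) : Measurable (fLP θ xs) := by
  have : fLP θ xs = fun x => x / (θ * (x + xs)) := rfl
  rw [this]
  exact measurable_id.div ((measurable_id.add_const xs).const_mul θ)

theorem fLP_mem (hθ : 0 < θ) (hxs : 0 < xs) (hθxs' : 1 - θ ≤ θ * xs)
    (x : ℝ) (hx : x ∈ Set.Icc (0:ℝ) 1) : fLP θ xs x ∈ Set.Icc (0:ℝ) 1 := by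
  obtain ⟨hx0, hx1⟩ := hx
  have hden : 0 < θ * (x + xs) := by positivity
  constructor
  · exact div_nonneg hx0 hden.le
  · rw [fLP, div_le_one hden]
    nlinarith

/-- The conditional success probability as an explicit function. -/
def gfun (n : ℕ) (h : Fin N) : Ω → ℝ :=
  fun ω => α * ((N : ℝ)⁻¹ * ∑ i, S.Z n i ω) + β * q + (1 - α - β) * fLP θ xs (S.Z n h ω)

theorem g_meas (hθ : 0 < θ) (n : ℕ) (h : Fin N) : Measurable[S.ℱ n] (gfun S n h) := by
  refine Measurable.add (Measurable.add ?_ measurable_const) ?_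
  · exact (Measurable.const_mul (Finset.measurable_sum _ fun i _ => Z_meas S n i) _).const_mul _
  · exact ((fLP_meas hθ).comp (Z_meas S n h)).const_mul _

theorem g_mem (hθ : 0 < θ) (hxs : 0 < xs) (hθxs' : 1 - θ ≤ θ * xs)
    (hN : 1 ≤ N) (hα : 0 ≤ α) (hβ : 0 ≤ β) (hαβ : α + β < 1) (hq : q ∈ Set.Ioc (0:ℝ) 1)
    (n : ℕ) (h : Fin N) (ω : Ω) : gfun S n h ω ∈ Set.Icc (0:ℝ) 1 := by
  have hNr : (0:ℝ) < (N:ℝ) := by exact_mod_cast hN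
  have hm : (N:ℝ)⁻¹ * ∑ i, S.Z n i ω ∈ Set.Icc (0:ℝ) 1 := by
    constructor
    · exact mul_nonneg (by positivity) (Finset.sum_nonneg fun i _ => (Z_mem S n i ω).1)
    · rw [inv_mul_le_iff₀ hNr, mul_one]
      calc ∑ i, S.Z n i ω ≤ ∑ _i : Fin N, (1:ℝ) :=
            Finset.sum_le_sum fun i _ => (Z_mem S n i ω).2
        _ = (N:ℝ) := by simp
  obtain ⟨hf0, hf1⟩ := fLP_mem hθ hxs hθxs' _ (Z_mem S n h ω)
  obtain ⟨hm0, hm1⟩ := hm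
  rw [gfun]
  constructor
  · have := hq.1
    nlinarith
  · have := hq.2
    nlinarith

theorem int_of_bdd {g : Ω → ℝ} (hm : AEStronglyMeasurable g μ) {Cb : ℝ}
    (hb : ∀ ω, |g ω| ≤ Cb) : Integrable g μ :=
  ⟨hm, HasFiniteIntegral.of_bounded (C := Cb)
    (ae_of_all _ fun ω => by simpa [Real.norm_eq_abs] using hb ω)⟩

/-- The Lyapunov process. -/
def Vfun (zhat : ℝ) (n : ℕ) : Ω → ℝ := fun ω => ∑ h, (S.Z n h ω - zhat)^2

theorem V_meas (zhat : ℝ) (n : ℕ) : Measurable[S.ℱ n] (Vfun S zhat n) :=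
  Finset.measurable_sum _ fun h _ => ((Z_meas S n h).sub measurable_const).pow_const 2

theorem V_bdd {zhat : ℝ} (hz0 : 0 < zhat) (hz1 : zhat < 1) (n : ℕ) (ω : Ω) :
    0 ≤ Vfun S zhat n ω ∧ Vfun S zhat n ω ≤ N := by
  constructor
  · exact Finset.sum_nonneg fun h _ => sq_nonneg _
  · have h1 : Vfun S zhat n ω ≤ ∑ _h : Fin N, (1:ℝ) := by
      refine Finset.sum_le_sum fun h _ => ?_
      obtain ⟨a1, a2⟩ := Z_mem S n h ω
      nlinarith
    simpa using h1

theorem V_int {zhat : ℝ} (hz0 : 0 < zhat) (hz1 : zhat < 1) (n : ℕ) :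
    Integrable (Vfun S zhat n) μ := by
  refine int_of_bdd (((V_meas S zhat n).mono (S.ℱ.le n) le_rfl).aestronglyMeasurable) (Cb := N) ?_
  intro ω
  obtain ⟨a1, a2⟩ := V_bdd S hz0 hz1 n ω
  rw [abs_of_nonneg a1]
  exact a2

set_option maxHeartbeats 2000000 in
theorem condexp_V (hθ : 0 < θ) (hxs : 0 < xs) (hθxs' : 1 - θ ≤ θ * xs)
    (hN : 1 ≤ N) (hα : 0 ≤ α) (hβ : 0 ≤ β) (hαβ : α + β < 1) (hq : q ∈ Set.Ioc (0:ℝ) 1)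
    {zhat : ℝ} (hz0 : 0 < zhat) (hz1 : zhat < 1)
    (hfixpt : (1 - α) * zhat = β * q + (1 - α - β) * fLP θ xs zhat) (n : ℕ) :
    μ[Vfun S zhat (n+1) | S.ℱ n] ≤ᵐ[μ]
      fun ω => (1 - (2*(β*q/zhat)) * S.r n) * Vfun S zhat n ω + 2*(N:ℝ)*(S.r n)^2 := by
  obtain ⟨hr0, hr1⟩ := S.r_mem n
  set r : ℝ := S.r n with hrdef
  -- the ρ constant
  set ρ : ℝ := 1 - β*q/zhat with hρdef
  have hDinv : (0:ℝ) < 1 / (θ * (zhat + xs)) := by positivity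
  have hrho_id : α + (1 - α - β) * (1/(θ*(zhat+xs))) = ρ := by
    have hfz : fLP θ xs zhat = zhat * (1/(θ*(zhat+xs))) := by
      rw [fLP]; field_simp
    rw [hfz] at hfixpt
    have h1 : (1-α-β)*(1/(θ*(zhat+xs))) = ((1-α)*zhat - β*q)/zhat := by
      rw [eq_div_iff (ne_of_gt hz0)]
      linear_combination -hfixpt
    rw [hρdef, h1]
    field_simp
    ring
  have hρ0 : 0 ≤ ρ := by
    rw [← hrho_id]
    have : 0 ≤ (1 - α - β) * (1/(θ*(zhat+xs))) := mul_nonneg (by linarith) hDinv.le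
    linarith
  have hρ1 : ρ ≤ 1 := by
    rw [hρdef]
    have : 0 ≤ β*q/zhat := div_nonneg (mul_nonneg hβ hq.1.le) hz0.le
    linarith
  -- decomposition functions
  set A : Ω → ℝ := fun ω => ∑ h, ((1-r)^2*(S.Z n h ω - zhat)^2
      - 2*r*(1-r)*zhat*(S.Z n h ω - zhat) + r^2*zhat^2) with hAdef
  set cf : Fin N → Ω → ℝ :=
    fun h ω => 2*r*(1-r)*(S.Z n h ω - zhat) + r^2*(1-2*zhat) with hcfdef
  -- pointwise decomposition of V(n+1)
  have step1 : Vfun S zhat (n+1) = fun ω => A ω + ∑ h, cf h ω * S.I (n+1) h ω := by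
    funext ω
    have per : ∀ h : Fin N, (S.Z (n+1) h ω - zhat)^2
        = ((1-r)^2*(S.Z n h ω - zhat)^2 - 2*r*(1-r)*zhat*(S.Z n h ω - zhat) + r^2*zhat^2)
          + cf h ω * S.I (n+1) h ω := by
      intro h
      rw [S.Z_rec n h ω, hcfdef, ← hrdef]
      rcases S.I_val n h ω with h' | h' <;> rw [h'] <;> ring
    rw [Vfun, Finset.sum_congr rfl fun h _ => per h, Finset.sum_add_distrib, hAdef]
  -- boundedness and measurability facts
  have hZb : ∀ h ω, |S.Z n h ω - zhat| ≤ 1 := by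
    intro h ω
    obtain ⟨a1, a2⟩ := Z_mem S n h ω
    rw [abs_le]; constructor <;> nlinarith
  have hZm : ∀ h : Fin N, Measurable[S.ℱ n] (fun ω => S.Z n h ω - zhat) :=
    fun h => (Z_meas S n h).sub measurable_const
  have hAm : StronglyMeasurable[S.ℱ n] A := by
    rw [hAdef]
    refine Measurable.stronglyMeasurable ?_
    refine Finset.measurable_sum _ fun h _ => ?_
    exact (((hZm h).pow_const 2).const_mul _).sub (((hZm h).const_mul _)) |>.add measurable_const
  have hAint : Integrable A μ := by
    refine int_of_bdd ((hAm.measurable.mono (S.ℱ.le n) le_rfl).aestronglyMeasurable)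
      (Cb := 4*N) ?_
    intro ω
    rw [hAdef]
    calc |∑ h, ((1-r)^2*(S.Z n h ω - zhat)^2
          - 2*r*(1-r)*zhat*(S.Z n h ω - zhat) + r^2*zhat^2)|
        ≤ ∑ h : Fin N, |(1-r)^2*(S.Z n h ω - zhat)^2
          - 2*r*(1-r)*zhat*(S.Z n h ω - zhat) + r^2*zhat^2| := Finset.abs_sum_le_sum_abs _ _
      _ ≤ ∑ _h : Fin N, (4:ℝ) := by
          refine Finset.sum_le_sum fun h _ => ?_
          have h1 := hZb h ω
          rw [abs_le] at h1 ⊢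
          obtain ⟨u1, u2⟩ := h1
          have hsq : (1-r)^2*(S.Z n h ω - zhat)^2
              - 2*r*(1-r)*zhat*(S.Z n h ω - zhat) + r^2*zhat^2
              = ((1-r)*(S.Z n h ω - zhat) - r*zhat)^2 := by ring
          have hp1 : 0 ≤ (1-r)*(1-(S.Z n h ω - zhat)) := mul_nonneg (by linarith) (by linarith)
          have hp2 : 0 ≤ (1-r)*(1+(S.Z n h ω - zhat)) := mul_nonneg (by linarith) (by linarith)
          have hb1 : -1 ≤ (1-r)*(S.Z n h ω - zhat) - r*zhat := by nlinarith
          have hb2 : (1-r)*(S.Z n h ω - zhat) - r*zhat ≤ 1 := by nlinarith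
          rw [hsq]
          constructor <;> nlinarith
      _ = 4*N := by simp [mul_comm]
  have hcfm : ∀ h : Fin N, StronglyMeasurable[S.ℱ n] (cf h) := by
    intro h
    rw [hcfdef]
    exact (((hZm h).const_mul _).add measurable_const).stronglyMeasurable
  have hcfb : ∀ h ω, |cf h ω| ≤ 5 := by
    intro h ω
    have h1 := hZb h ω
    rw [abs_le] at h1
    obtain ⟨u1, u2⟩ := h1
    have hcf_eq : cf h ω = 2*r*(1-r)*(S.Z n h ω - zhat) + r^2*(1-2*zhat) := rfl
    rw [hcf_eq, abs_le]
    have hp1 : 0 ≤ r*((1-r)*(1-(S.Z n h ω - zhat))) :=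
      mul_nonneg hr0.le (mul_nonneg (by linarith) (by linarith))
    have hp2 : 0 ≤ r*((1-r)*(1+(S.Z n h ω - zhat))) :=
      mul_nonneg hr0.le (mul_nonneg (by linarith) (by linarith))
    have hr2 : r^2 ≤ 1 := by nlinarith
    have hq1 : r^2*(1-2*zhat) ≤ r^2 := by nlinarith [sq_nonneg r]
    have hq2 : -(r^2) ≤ r^2*(1-2*zhat) := by nlinarith [sq_nonneg r]
    have hrr : r*(1-r) ≤ 1 := by nlinarith
    constructor <;> nlinarith [sq_nonneg r]
  have hIint : ∀ h : Fin N, Integrable (S.I (n+1) h) μ := by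
    intro h
    refine int_of_bdd (((S.I_meas n h).mono (S.ℱ.le (n+1)) le_rfl).aestronglyMeasurable)
      (Cb := 1) ?_
    intro ω
    obtain ⟨a1, a2⟩ := I_mem S n h ω
    rw [abs_le]; exact ⟨by linarith, a2⟩
  have hcfIint : ∀ h : Fin N, Integrable (fun ω => cf h ω * S.I (n+1) h ω) μ := by
    intro h
    refine int_of_bdd ?_ (Cb := 5) ?_
    · exact (((hcfm h).measurable.mono (S.ℱ.le n) le_rfl).mul
        ((S.I_meas n h).mono (S.ℱ.le (n+1)) le_rfl)).aestronglyMeasurable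
    · intro ω
      rw [abs_mul]
      obtain ⟨a1, a2⟩ := I_mem S n h ω
      have h2 := hcfb h ω
      have h3 : |S.I (n+1) h ω| ≤ 1 := by rw [abs_le]; exact ⟨by linarith, a2⟩
      calc |cf h ω| * |S.I (n+1) h ω| ≤ 5 * 1 :=
        mul_le_mul h2 h3 (abs_nonneg _) (by norm_num)
      _ = 5 := by norm_num
  -- the conditional expectation identity
  have key : μ[Vfun S zhat (n+1) | S.ℱ n] =ᵐ[μ]
      fun ω => A ω + ∑ h, cf h ω * gfun S n h ω := by
    rw [step1]
    exact condexp_helper (S.ℱ n) (S.ℱ.le n) N A cf _ _ hAint hAm hcfm hIint hcfIint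
      (fun h => S.condProb n h)
  -- pointwise bound
  have hpt : ∀ ω, A ω + ∑ h, cf h ω * gfun S n h ω
      ≤ (1 - (2*(β*q/zhat)) * r) * Vfun S zhat n ω + 2*(N:ℝ)*r^2 := by
    intro ω
    set V : ℝ := Vfun S zhat n ω with hVdef
    obtain ⟨hV0, hVN⟩ := V_bdd S hz0 hz1 n ω
    rw [← hVdef] at hV0 hVN
    set T : ℝ := ∑ h, (S.Z n h ω - zhat) * (gfun S n h ω - zhat) with hTdef
    set B : ℝ := ∑ h, ((1-2*zhat) * gfun S n h ω + zhat^2) with hBdef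
    have hexp : A ω + ∑ h, cf h ω * gfun S n h ω
        = (1-r)^2 * V + 2*r*(1-r) * T + r^2 * B := by
      rw [hAdef, hTdef, hBdef, hVdef, Vfun]
      rw [← Finset.sum_add_distrib, Finset.mul_sum, Finset.mul_sum, Finset.mul_sum,
        ← Finset.sum_add_distrib, ← Finset.sum_add_distrib]
      refine Finset.sum_congr rfl fun h _ => ?_
      rw [hcfdef]
      ring
    have hT : T ≤ ρ * V := by
      rw [hTdef, hVdef, Vfun, ← hrho_id]
      have := drift (α := α) (β := β) (q := q) hθ hxs hz0 hα hαβ hfixpt N hN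
        (fun h => S.Z n h ω) (fun h => (Z_mem S n h ω).1)
      have heq2 : (1 - β * q / zhat) = α + (1 - α - β) * (1/(θ*(zhat+xs))) := hrho_id.symm
      calc ∑ h, (S.Z n h ω - zhat) * (gfun S n h ω - zhat)
          ≤ (1 - β * q / zhat) * ∑ h, (S.Z n h ω - zhat)^2 := by
            simpa [gfun] using this
        _ = (α + (1 - α - β) * (1/(θ*(zhat+xs)))) * ∑ h, (S.Z n h ω - zhat)^2 := by
            rw [heq2]
    have hB : B ≤ N := by
      rw [hBdef]
      calc ∑ h, ((1-2*zhat) * gfun S n h ω + zhat^2) ≤ ∑ _h : Fin N, (1:ℝ) := by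
            refine Finset.sum_le_sum fun h _ => ?_
            obtain ⟨g0, g1⟩ := g_mem S hθ hxs hθxs' hN hα hβ hαβ hq n h ω
            nlinarith
        _ = (N:ℝ) := by simp
    rw [hexp]
    have h2r : 0 ≤ 2*r*(1-r) := by nlinarith
    have hstep2 : 2*r*(1-r) * T ≤ 2*r*(1-r) * (ρ * V) := mul_le_mul_of_nonneg_left hT h2r
    have hstep3 : r^2 * B ≤ r^2 * N := mul_le_mul_of_nonneg_left hB (sq_nonneg r)
    have hρV : 0 ≤ ρ * V := mul_nonneg hρ0 hV0
    have hrV : r^2 * V ≤ r^2 * N := mul_le_mul_of_nonneg_left hVN (sq_nonneg r)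
    rw [hρdef] at hstep2 hρV
    nlinarith [sq_nonneg r, mul_nonneg (mul_nonneg (sq_nonneg r) hρ0) hV0]
  calc μ[Vfun S zhat (n+1) | S.ℱ n]
      ≤ᵐ[μ] fun ω => A ω + ∑ h, cf h ω * gfun S n h ω := key.le
    _ ≤ᵐ[μ] _ := ae_of_all _ hpt

set_option maxHeartbeats 1000000 in
theorem V_to_zero (hθ : 0 < θ) (hxs : 0 < xs) (hθxs' : 1 - θ ≤ θ * xs)
    (hN : 1 ≤ N) (hα : 0 ≤ α) (hβ : 0 ≤ β) (hβpos : 0 < β) (hαβ : α + β < 1)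
    (hq : q ∈ Set.Ioc (0:ℝ) 1)
    {zhat : ℝ} (hz0 : 0 < zhat) (hz1 : zhat < 1)
    (hfixpt : (1 - α) * zhat = β * q + (1 - α - β) * fLP θ xs zhat) :
    ∀ᵐ ω ∂μ, Tendsto (fun n => Vfun S zhat n ω) atTop (nhds 0) := by
  have hsq : Summable (fun k => (S.r k)^2) := r_sq_summable S.r_mem S.r_lim
  set t : ℕ → ℝ := fun n => ∑' k, (S.r (k + n))^2 with ht
  have hshift : ∀ n, Summable (fun k => (S.r (k + n))^2) :=
    fun n => (summable_nat_add_iff n).2 hsq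
  have ht_nonneg : ∀ n, 0 ≤ t n := fun n => tsum_nonneg fun k => sq_nonneg _
  have ht_formula : ∀ n, t n = (∑' k, (S.r k)^2) - ∑ i ∈ Finset.range n, (S.r i)^2 := by
    intro n
    have := Summable.sum_add_tsum_nat_add (f := fun k => (S.r k)^2) n hsq
    rw [ht]
    linarith [this]
  have ht_le : ∀ n, t n ≤ ∑' k, (S.r k)^2 := by
    intro n
    rw [ht_formula n]
    have : 0 ≤ ∑ i ∈ Finset.range n, (S.r i)^2 :=
      Finset.sum_nonneg fun i _ => sq_nonneg _
    linarith
  have ht_zero : Tendsto t atTop (nhds 0) := by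
    rw [funext ht_formula]
    have h1 : Tendsto (fun n => ∑ i ∈ Finset.range n, (S.r i)^2) atTop
        (nhds (∑' k, (S.r k)^2)) := hsq.hasSum.tendsto_sum_nat
    have h2 := (tendsto_const_nhds (x := ∑' k, (S.r k)^2)).sub h1
    rw [sub_self] at h2
    exact h2
  have ht_rec : ∀ n, t n = (S.r n)^2 + t (n+1) := by
    intro n
    have h1 := ht_formula n
    have h2 := ht_formula (n+1)
    rw [Finset.sum_range_succ] at h2
    linarith
  -- the supermartingale
  set Y : ℕ → Ω → ℝ := fun n ω => Vfun S zhat n ω + 2*(N:ℝ)*t n with hY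
  have hYadp : StronglyAdapted S.ℱ Y := fun n =>
    ((V_meas S zhat n).add measurable_const).stronglyMeasurable
  have hYint : ∀ n, Integrable (Y n) μ :=
    fun n => (V_int S hz0 hz1 n).add (integrable_const _)
  have hYcond : ∀ n, μ[Y (n+1)|S.ℱ n] ≤ᵐ[μ] Y n := by
    intro n
    have h1 : μ[Y (n+1)|S.ℱ n] =ᵐ[μ]
        μ[Vfun S zhat (n+1)|S.ℱ n] + fun _ => 2*(N:ℝ)*t (n+1) := by
      have heq : Y (n+1) = fun ω => Vfun S zhat (n+1) ω + 2*(N:ℝ)*t (n+1) := rfl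
      rw [heq]
      refine (condExp_add (V_int S hz0 hz1 (n+1)) (integrable_const _) (S.ℱ n)).trans ?_
      refine Filter.EventuallyEq.add (Filter.EventuallyEq.rfl) ?_
      rw [condExp_const (S.ℱ.le n)]
    have h2 := condexp_V S hθ hxs hθxs' hN hα hβ hαβ hq hz0 hz1 hfixpt n
    calc μ[Y (n+1)|S.ℱ n]
        =ᵐ[μ] μ[Vfun S zhat (n+1)|S.ℱ n] + fun _ => 2*(N:ℝ)*t (n+1) := h1
      _ ≤ᵐ[μ] Y n := by
          filter_upwards [h2] with ω hω
          simp only [Pi.add_apply] at hω ⊢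
          have hbq : 0 ≤ β*q/zhat := div_nonneg (mul_nonneg hβ hq.1.le) hz0.le
          have hc : 0 ≤ (2*(β*q/zhat)) * S.r n :=
            mul_nonneg (by linarith) (S.r_mem n).1.le
          have hV0 := (V_bdd S hz0 hz1 n ω).1
          have htr := ht_rec n
          have hcV : 0 ≤ (2*(β*q/zhat)) * S.r n * Vfun S zhat n ω :=
            mul_nonneg hc hV0
          have hYeq : Y n ω = Vfun S zhat n ω + 2*(N:ℝ)*t n := rfl
          rw [hYeq]
          nlinarith [hω]
  have hsuper : Supermartingale Y S.ℱ μ := supermartingale_nat hYadp hYint hYcond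
  have hsub : Submartingale (-Y) S.ℱ μ := hsuper.neg
  set R : ℝ := (N:ℝ) + 2*(N:ℝ)*(∑' k, (S.r k)^2) with hR
  have hRnn : 0 ≤ R := by
    have h0 := ht_le 0
    have h1 := ht_nonneg 0
    have : (0:ℝ) ≤ (N:ℝ) := Nat.cast_nonneg N
    nlinarith
  have hbdd : ∀ n, eLpNorm ((-Y) n) 1 μ ≤ R.toNNReal := by
    intro n
    have hb : ∀ᵐ ω ∂μ, ‖(-Y) n ω‖ ≤ R := by
      refine ae_of_all _ fun ω => ?_
      obtain ⟨a1, a2⟩ := V_bdd S hz0 hz1 n ω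
      have h3 := ht_nonneg n
      have h4 := ht_le n
      have h5 : (0:ℝ) ≤ (N:ℝ) := Nat.cast_nonneg N
      simp only [Pi.neg_apply, norm_neg, Real.norm_eq_abs, hY]
      rw [abs_of_nonneg (by nlinarith)]
      nlinarith
    have := eLpNorm_le_of_ae_bound (p := 1) (μ := μ) hb
    simpa [measure_univ, ENNReal.ofReal] using this
  have hconv := hsub.exists_ae_tendsto_of_bdd hbdd
  -- V converges a.s.
  have hVconv : ∀ᵐ ω ∂μ, ∃ c, Tendsto (fun n => Vfun S zhat n ω) atTop (nhds c) := by
    filter_upwards [hconv] with ω hω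
    obtain ⟨c, hc⟩ := hω
    refine ⟨-c, ?_⟩
    have h1 : Tendsto (fun n => Y n ω) atTop (nhds (-c)) := by
      have h0 := hc.neg
      refine h0.congr fun n => by simp
    have h2 : Tendsto (fun n => Y n ω - 2*(N:ℝ)*t n) atTop (nhds (-c - 2*(N:ℝ)*0)) :=
      h1.sub (ht_zero.const_mul _)
    simp only [mul_zero, sub_zero] at h2
    refine h2.congr fun n => by rw [hY]; ring
  -- expectation tends to zero
  set e : ℕ → ℝ := fun n => ∫ ω, Vfun S zhat n ω ∂μ with he
  have he0 : ∀ n, 0 ≤ e n := fun n =>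
    integral_nonneg fun ω => (V_bdd S hz0 hz1 n ω).1
  have herec : ∀ n, e (n+1) ≤ (1 - (2*(β*q/zhat)) * S.r n) * e n + (2*(N:ℝ)) * (S.r n)^2 := by
    intro n
    have h1 : e (n+1) = ∫ ω, (μ[Vfun S zhat (n+1)|S.ℱ n]) ω ∂μ :=
      (integral_condExp (S.ℱ.le n) (f := Vfun S zhat (n+1))).symm
    have h2 := condexp_V S hθ hxs hθxs' hN hα hβ hαβ hq hz0 hz1 hfixpt n
    have h3 : Integrable (fun ω => (1 - (2*(β*q/zhat)) * S.r n) * Vfun S zhat n ω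
        + 2*(N:ℝ)*(S.r n)^2) μ := ((V_int S hz0 hz1 n).const_mul _).add (integrable_const _)
    rw [h1]
    calc ∫ ω, (μ[Vfun S zhat (n+1)|S.ℱ n]) ω ∂μ
        ≤ ∫ ω, ((1 - (2*(β*q/zhat)) * S.r n) * Vfun S zhat n ω + 2*(N:ℝ)*(S.r n)^2) ∂μ :=
          integral_mono_ae integrable_condExp h3 h2
      _ = (1 - (2*(β*q/zhat)) * S.r n) * e n + (2*(N:ℝ)) * (S.r n)^2 := by
          rw [integral_add ((V_int S hz0 hz1 n).const_mul _) (integrable_const _),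
            integral_const_mul, integral_const]
          simp [he]
  have hez : Tendsto e atTop (nhds 0) :=
    e_to_zero (mul_pos two_pos (div_pos (mul_pos hβpos hq.1) hz0)) (by positivity)
      he0 (fun n => (S.r_mem n).1)
      (r_to_zero S.r_mem S.r_lim) (r_sum_div S.r_mem S.r_lim) herec
  -- convergence in L1 hence in measure, subsequence a.e. to 0
  have hmeas : ∀ n, AEStronglyMeasurable (Vfun S zhat n) μ :=
    fun n => ((V_meas S zhat n).mono (S.ℱ.le n) le_rfl).aestronglyMeasurable
  have hL1 : Tendsto (fun n => eLpNorm (Vfun S zhat n - (fun _ => (0:ℝ))) 1 μ) atTop (nhds 0) := by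
    have heq : ∀ n, eLpNorm (Vfun S zhat n - (fun _ => (0:ℝ))) 1 μ = ENNReal.ofReal (e n) := by
      intro n
      have h1 : (Vfun S zhat n - fun _ => (0:ℝ)) = Vfun S zhat n := by funext ω; simp
      have h2' : ∫ ω, ‖Vfun S zhat n ω‖ ∂μ = e n := by
        refine integral_congr_ae (ae_of_all _ fun ω => ?_)
        simp only [Real.norm_eq_abs]
        exact abs_of_nonneg (V_bdd S hz0 hz1 n ω).1
      rw [h1, eLpNorm_one_eq_lintegral_enorm,
        ← ofReal_integral_norm_eq_lintegral_enorm (V_int S hz0 hz1 n), h2']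
    rw [funext heq]
    have := (ENNReal.continuous_ofReal.tendsto 0).comp hez
    simpa [Function.comp_def] using this
  have hmeas2 : TendstoInMeasure μ (fun n => Vfun S zhat n) atTop (fun _ => (0:ℝ)) :=
    tendstoInMeasure_of_tendsto_eLpNorm one_ne_zero hmeas aestronglyMeasurable_const hL1
  obtain ⟨ns, hns, hae⟩ := hmeas2.exists_seq_tendsto_ae
  filter_upwards [hVconv, hae] with ω h1 h2
  obtain ⟨c, hc⟩ := h1
  have hc0 : c = 0 := tendsto_nhds_unique (hc.comp hns.tendsto_atTop) h2
  rwa [hc0] at hc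

theorem Z_tendsto (hθ : 0 < θ) (hxs : 0 < xs) (hθxs' : 1 - θ ≤ θ * xs)
    (hN : 1 ≤ N) (hα : 0 ≤ α) (hβ : 0 ≤ β) (hβpos : 0 < β) (hαβ : α + β < 1)
    (hq : q ∈ Set.Ioc (0:ℝ) 1)
    {zhat : ℝ} (hz0 : 0 < zhat) (hz1 : zhat < 1)
    (hfixpt : (1 - α) * zhat = β * q + (1 - α - β) * fLP θ xs zhat) :
    ∀ᵐ ω ∂μ, ∀ h : Fin N, Tendsto (fun n => S.Z n h ω) atTop (nhds zhat) := by
  filter_upwards [V_to_zero S hθ hxs hθxs' hN hα hβ hβpos hαβ hq hz0 hz1 hfixpt] with ω hV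
  intro h
  have hsq : Tendsto (fun n => (S.Z n h ω - zhat)^2) atTop (nhds 0) := by
    refine squeeze_zero (fun n => sq_nonneg _) (fun n => ?_) hV
    exact Finset.single_le_sum (f := fun i => (S.Z n i ω - zhat)^2)
      (fun i _ => sq_nonneg _) (Finset.mem_univ h)
  have habs : Tendsto (fun n => |S.Z n h ω - zhat|) atTop (nhds 0) := by
    have h1 := (Real.continuous_sqrt.tendsto 0).comp hsq
    rw [Real.sqrt_zero] at h1
    refine h1.congr fun n => ?_
    simp only [Function.comp_apply, Real.sqrt_sq_eq_abs]
  have hsub : Tendsto (fun n => S.Z n h ω - zhat) atTop (nhds 0) := by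
    refine tendsto_of_tendsto_of_tendsto_of_le_of_le (g := fun n => -|S.Z n h ω - zhat|)
      (h := fun n => |S.Z n h ω - zhat|) ?_ habs
      (fun n => neg_abs_le _) (fun n => le_abs_self _)
    simpa using habs.neg
  exact tendsto_sub_nhds_zero_iff.mp hsub

theorem I_cesaro {ω : Ω} {zhat : ℝ} (hz0 : 0 < zhat) (hz1 : zhat < 1) (h : Fin N)
    (hconv : Tendsto (fun n => S.Z n h ω) atTop (nhds zhat)) :
    Tendsto (fun n : ℕ => (n:ℝ)⁻¹ * ∑ k ∈ Finset.range n, S.I (k+1) h ω)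
      atTop (nhds zhat) := by
  set u : ℕ → ℝ := fun k => (S.I (k+1) h ω - S.Z k h ω) * (1 - ((k:ℝ)+1) * S.r k) with hu
  have hid : ∀ n, ∑ k ∈ Finset.range n, S.I (k+1) h ω
      = (n:ℝ) * S.Z n h ω + ∑ k ∈ Finset.range n, u k := by
    intro n
    induction n with
    | zero => simp
    | succ n ih =>
      rw [Finset.sum_range_succ, ih, Finset.sum_range_succ, S.Z_rec n h ω]
      have huk : u n = (S.I (n+1) h ω - S.Z n h ω) * (1 - ((n:ℝ)+1) * S.r n) := rfl
      rw [huk]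
      push_cast
      ring
  have hu0 : Tendsto u atTop (nhds 0) := by
    have hb : ∀ k : ℕ, ‖u k‖ ≤ |1 - ((k:ℝ)+1)*S.r k| := by
      intro k
      have huk : u k = (S.I (k+1) h ω - S.Z k h ω) * (1 - ((k:ℝ)+1) * S.r k) := rfl
      rw [Real.norm_eq_abs, huk, abs_mul]
      have h1 : |S.I (k+1) h ω - S.Z k h ω| ≤ 1 := by
        obtain ⟨a1, a2⟩ := I_mem S k h ω
        obtain ⟨b1, b2⟩ := Z_mem S k h ω
        rw [abs_le]
        constructor <;> linarith
      nlinarith [abs_nonneg (1 - ((k:ℝ)+1)*S.r k)]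
    have hlim2 : Tendsto (fun k : ℕ => |1 - ((k:ℝ)+1)*S.r k|) atTop (nhds 0) := by
      have h1 := r_succ_lim S.r_mem S.r_lim
      have h2 : Tendsto (fun k : ℕ => 1 - ((k:ℝ)+1)*S.r k) atTop (nhds 0) := by
        have := (tendsto_const_nhds (x := (1:ℝ)) (f := atTop (α := ℕ))).sub h1
        rw [sub_self] at this
        exact this
      have h3 := h2.abs
      rwa [abs_zero] at h3
    exact squeeze_zero_norm hb hlim2
  have hc := hu0.cesaro
  have hfinal : Tendsto (fun n : ℕ => S.Z n h ω + (n:ℝ)⁻¹ * ∑ k ∈ Finset.range n, u k)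
      atTop (nhds (zhat + 0)) := hconv.add hc
  rw [add_zero] at hfinal
  refine hfinal.congr' ?_
  filter_upwards [eventually_ge_atTop 1] with n hn
  have hne : (n:ℝ) ≠ 0 := Nat.cast_ne_zero.mpr (by omega)
  rw [hid n]
  field_simp

end Stoch

/-- Theorem 3.1 for `f = f_LP`, `β > 0`: the system almost surely
asymptotically synchronizes toward the constant `ẑ·(1,…,1)`, where `ẑ` is the unique root
in `(0,1)` of the quadratic `(1−α)θz² + [(1−α)θx* − βθq − (1−α−β)]z − βqθx* = 0`, and so do
the empirical means; in particular the system is predictable. -/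
theorem stmt7 {Ω : Type*} [MeasurableSpace Ω] [StandardBorelSpace Ω] [Nonempty Ω]
    (μ : Measure Ω) [IsProbabilityMeasure μ]
    (N : ℕ) (hN : 1 ≤ N) (α β q : ℝ)
    (hα : α ∈ Set.Ico (0 : ℝ) 1) (hβ : β ∈ Set.Ico (0 : ℝ) 1) (hβpos : 0 < β)
    (hαβ : α + β ∈ Set.Ioo (0 : ℝ) 1) (hq : q ∈ Set.Ioc (0 : ℝ) 1)
    (θ xs : ℝ) (hθ : 0 < θ) (hθxs : θ * xs ∈ Set.Ioc (0 : ℝ) 1)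
    (hθxs' : 1 - θ ≤ θ * xs)
    (zhat : ℝ) (hzhat : zhat ∈ Set.Ioo (0 : ℝ) 1)
    (hzhat_root : quadLP α β q θ xs zhat = 0)
    (hzhat_uniq : ∀ w ∈ Set.Ioo (0 : ℝ) 1, quadLP α β q θ xs w = 0 → w = zhat)
    (S : InteractingSystem N α β q (fLP θ xs) Ω μ) :
    (∀ᵐ ω ∂μ, Tendsto (fun n => fun h : Fin N => S.Z n h ω) atTop
      (nhds fun _ : Fin N => zhat)) ∧
    (∀ᵐ ω ∂μ, Tendsto
      (fun n : ℕ => fun h : Fin N => (n : ℝ)⁻¹ * ∑ k ∈ Finset.range n, S.I (k + 1) h ω)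
      atTop (nhds fun _ : Fin N => zhat)) := by
  have hz0 := hzhat.1
  have hz1 := hzhat.2
  have hxs : 0 < xs := by
    by_contra hcon
    push_neg at hcon
    nlinarith [hθxs.1, mul_nonpos_of_nonneg_of_nonpos hθ.le hcon]
  have hfixpt : (1 - α) * zhat = β * q + (1 - α - β) * fLP θ xs zhat :=
    hfix hθ hxs hz0 hzhat_root
  have hmain := Z_tendsto S hθ hxs hθxs' hN hα.1 hβ.1 hβpos hαβ.2 hq hz0 hz1 hfixpt
  constructor
  · filter_upwards [hmain] with ω hω
    rw [tendsto_pi_nhds]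
    intro h
    exact hω h
  · filter_upwards [hmain] with ω hω
    rw [tendsto_pi_nhds]
    intro h
    exact I_cesaro S hz0 hz1 h (hω h)

end
end

section
/- (Strict Lyapunov inequality from the proof of Theorem 3.1.) Let f = f_LP with β = 0 and θx* < 1, so that α ∈ (0,1), and set z* = (1−θx*)/θ and z*̄ = z*·(1,…,1) ∈ [0,1]^N. Then Z(F) = {0, z*̄} and for every z ∈ [0,1]^N with z ∉ Z(F) one has ⟨F(z), z − z*̄⟩ < 0, where ⟨·,·⟩ denotes the Euclidean inner product on ℝ^N. -/
noncomputable section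

/-- strict Lyapunov inequality from the proof of Theorem 3.1, for `f = f_LP`
with `β = 0` and `θx* < 1`: `Z(F) = {0, z*·𝟏}` and `⟨F(z), z − z*·𝟏⟩ < 0` off `Z(F)`. -/
theorem stmt8 (N : ℕ) (hN : 2 ≤ N) (α q : ℝ)
    (hα : α ∈ Set.Ioo (0 : ℝ) 1) (hq : q ∈ Set.Ioc (0 : ℝ) 1)
    (θ xs : ℝ) (hθ : 0 < θ) (hθxs : θ * xs ∈ Set.Ioo (0 : ℝ) 1)
    (hθxs' : 1 - θ ≤ θ * xs) :
    ZeroSet N α 0 q (fLP θ xs) =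
      {(0 : Fin N → ℝ), fun _ => (1 - θ * xs) / θ} ∧
    ∀ z : Fin N → ℝ, (∀ h, z h ∈ Set.Icc (0 : ℝ) 1) →
      z ∉ ZeroSet N α 0 q (fLP θ xs) →
      ∑ h, Fmap N α 0 q (fLP θ xs) z h * (z h - (1 - θ * xs) / θ) < 0 := by
  obtain ⟨hα0, hα1⟩ := hα
  obtain ⟨hm0, hm1⟩ := hθxs
  have hθne : θ ≠ 0 := ne_of_gt hθ
  have hxs : 0 < xs := by nlinarith
  have hNpos : 0 < N := by omega
  have hN0 : (N : ℝ) ≠ 0 := by positivity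
  set zst : ℝ := (1 - θ * xs) / θ with hzst
  have hzst_pos : 0 < zst := div_pos (by linarith) hθ
  have hzst_le : zst ≤ 1 := by rw [hzst, div_le_one hθ]; linarith
  -- key algebraic identity for fLP
  have hf : ∀ x : ℝ, 0 ≤ x → fLP θ xs x = x + x * (zst - x) / (x + xs) := by
    intro x hx
    have hxxs : x + xs ≠ 0 := by positivity
    rw [fLP, hzst]
    field_simp
    ring
  -- the strict Lyapunov inequality off {0, zst 𝟏}
  have key : ∀ z : Fin N → ℝ, (∀ h, z h ∈ Set.Icc (0 : ℝ) 1) →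
      z ≠ 0 → z ≠ (fun _ => zst) →
      ∑ h, Fmap N α 0 q (fLP θ xs) z h * (z h - zst) < 0 := by
    intro z hz hz0 hzs
    set m : ℝ := (N : ℝ)⁻¹ * ∑ i, z i with hm
    have hsum : ∑ i, z i = (N : ℝ) * m := by rw [hm]; field_simp
    have hrw : ∀ h, Fmap N α 0 q (fLP θ xs) z h * (z h - zst)
        = α * ((m - z h) * (z h - zst))
          - (1 - α) * (z h * (z h - zst) ^ 2 / (z h + xs)) := by
      intro h
      have hzh0 := (hz h).1
      have hd : z h + xs ≠ 0 := by positivity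
      simp only [Fmap]
      rw [← hm, hf (z h) hzh0]
      field_simp
      ring
    have hT1 : ∑ h, (m - z h) * (z h - zst) = -∑ h, (z h - m) ^ 2 := by
      have h1 : ∑ h, ((m - z h) * (z h - zst) + (z h - m) ^ 2)
          = ∑ h, (z h - m) * (zst - m) :=
        Finset.sum_congr rfl (fun h _ => by ring)
      have h2 : ∑ h : Fin N, (z h - m) * (zst - m)
          = (∑ h, (z h - m)) * (zst - m) := (Finset.sum_mul _ _ _).symm
      have h3 : ∑ h : Fin N, (z h - m) = 0 := by
        rw [Finset.sum_sub_distrib, hsum]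
        simp [Finset.card_univ]
      rw [Finset.sum_add_distrib, h2, h3, zero_mul] at h1
      linarith
    have hS : ∑ h, Fmap N α 0 q (fLP θ xs) z h * (z h - zst)
        = α * (-∑ h, (z h - m) ^ 2)
          - (1 - α) * ∑ h, z h * (z h - zst) ^ 2 / (z h + xs) := by
      calc ∑ h, Fmap N α 0 q (fLP θ xs) z h * (z h - zst)
          = ∑ h, (α * ((m - z h) * (z h - zst))
              - (1 - α) * (z h * (z h - zst) ^ 2 / (z h + xs))) :=
            Finset.sum_congr rfl (fun h _ => hrw h)
        _ = α * ∑ h, (m - z h) * (z h - zst)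
              - (1 - α) * ∑ h, z h * (z h - zst) ^ 2 / (z h + xs) := by
            rw [Finset.sum_sub_distrib, Finset.mul_sum, Finset.mul_sum]
        _ = _ := by rw [hT1]
    rw [hS]
    have hT1nn : 0 ≤ ∑ h, (z h - m) ^ 2 :=
      Finset.sum_nonneg fun h _ => sq_nonneg _
    have hT2nn : 0 ≤ ∑ h, z h * (z h - zst) ^ 2 / (z h + xs) := by
      refine Finset.sum_nonneg fun h _ => ?_
      have := (hz h).1
      have : 0 < z h + xs := by linarith
      positivity
    by_cases hc : ∀ h, z h = m
    · -- constant vector, m ≠ 0 and m ≠ zst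
      have hmne0 : m ≠ 0 := by
        intro h0
        exact hz0 (funext fun h => by rw [hc h, h0]; rfl)
      have hmnez : m ≠ zst := by
        intro h0
        exact hzs (funext fun h => by rw [hc h, h0])
      have hhead : Fin N := ⟨0, hNpos⟩
      have hm0' : 0 < m := lt_of_le_of_ne (by rw [← hc hhead]; exact (hz hhead).1) (Ne.symm hmne0)
      have hT2pos : 0 < ∑ h, z h * (z h - zst) ^ 2 / (z h + xs) := by
        refine Finset.sum_pos (fun h _ => ?_) ⟨hhead, Finset.mem_univ _⟩
        rw [hc h]
        have hden : 0 < m + xs := by linarith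
        have hnum : 0 < m * (m - zst) ^ 2 := by
          have : m - zst ≠ 0 := sub_ne_zero.mpr hmnez
          positivity
        exact div_pos hnum hden
      nlinarith
    · push_neg at hc
      obtain ⟨h0, hh0⟩ := hc
      have hT1pos : 0 < ∑ h, (z h - m) ^ 2 := by
        refine Finset.sum_pos' (fun h _ => sq_nonneg _) ⟨h0, Finset.mem_univ _, ?_⟩
        have : z h0 - m ≠ 0 := sub_ne_zero.mpr hh0
        positivity
      nlinarith
  -- membership of the two points
  have hcube0 : ∀ h : Fin N, (0 : Fin N → ℝ) h ∈ Set.Icc (0 : ℝ) 1 := by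
    intro h; simp
  have hmem0 : (0 : Fin N → ℝ) ∈ ZeroSet N α 0 q (fLP θ xs) := by
    refine ⟨hcube0, funext fun h => ?_⟩
    simp [Fmap, fLP]
  have hfzst : fLP θ xs zst = zst := by
    have hden : θ * (zst + xs) = 1 := by
      rw [hzst]; field_simp; ring
    rw [fLP, hden, div_one]
  have hmemz : (fun _ : Fin N => zst) ∈ ZeroSet N α 0 q (fLP θ xs) := by
    refine ⟨fun h => ⟨le_of_lt hzst_pos, hzst_le⟩, funext fun h => ?_⟩
    simp only [Fmap, hfzst, Finset.sum_const, Finset.card_univ, Fintype.card_fin,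
      nsmul_eq_mul]
    field_simp
    ring_nf
    rfl
  constructor
  · ext z
    constructor
    · rintro ⟨hz, hF⟩
      by_contra hcon
      simp only [Set.mem_insert_iff, Set.mem_singleton_iff, not_or] at hcon
      obtain ⟨hz0, hz1⟩ := hcon
      have hk := key z hz hz0 hz1
      have hzero : ∑ h, Fmap N α 0 q (fLP θ xs) z h * (z h - zst) = 0 := by
        refine Finset.sum_eq_zero fun h _ => ?_
        rw [show Fmap N α 0 q (fLP θ xs) z h = 0 from congrFun hF h, zero_mul]
      rw [hzero] at hk
      exact lt_irrefl 0 hk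
    · rintro (rfl | rfl)
      · exact hmem0
      · exact hmemz
  · intro z hz hnz
    exact key z hz (fun h => hnz (h ▸ hmem0)) (fun h => hnz (h ▸ hmemz))

end
end

section
/- (Lemma 3.2, uniqueness part, case f = f_LogP.) Let f = f_LogP and assume θ/4 ≤ (1−α)/(1−α−β). Then the function φ(x) = f(x) − (1−α)x/(1−α−β) + βq/(1−α−β) is strictly decreasing on [0,1] except possibly at the single point x*, and it has exactly one zero z₀ in [0,1]; moreover z₀ ∈ (0,1). Consequently F has a unique synchronization zero point, namely z₀·(1,…,1). -/
noncomputable section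

/-- The Logit Probability function `f_LogP(x) = 1/(1+exp(−θ(x−x*)))`. -/
def fLogP (θ xs x : ℝ) : ℝ := 1 / (1 + Real.exp (-θ * (x - xs)))

/-- `φ(x) = f(x) − (1−α)x/(1−α−β) + βq/(1−α−β)`. -/
def phiSync (α β q : ℝ) (f : ℝ → ℝ) (x : ℝ) : ℝ :=
  f x - (1 - α) * x / (1 - α - β) + β * q / (1 - α - β)


lemma fLogP_hasDeriv (θ xs x : ℝ) :
    HasDerivAt (fLogP θ xs)
      (θ * Real.exp (-θ * (x - xs)) / (1 + Real.exp (-θ * (x - xs)))^2) x := by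
  have h1 : HasDerivAt (fun y : ℝ => -θ * (y - xs)) (-θ) x := by
    simpa using ((hasDerivAt_id x).sub_const xs).const_mul (-θ)
  have h3 : HasDerivAt (fun y : ℝ => 1 + Real.exp (-θ * (y - xs)))
      (Real.exp (-θ * (x - xs)) * (-θ)) x := h1.exp.const_add 1
  have hne : (1 + Real.exp (-θ * (x - xs))) ≠ 0 := by positivity
  have h4 : HasDerivAt (fun y => (1 + Real.exp (-θ * (y - xs)))⁻¹)
      (-(Real.exp (-θ * (x - xs)) * -θ) / (1 + Real.exp (-θ * (x - xs))) ^ 2) x := h3.inv hne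
  have : fLogP θ xs = fun y => (1 + Real.exp (-θ * (y - xs)))⁻¹ := by
    funext y; simp [fLogP, one_div]
  rw [this]
  convert h4 using 1
  ring

lemma dbound (θ : ℝ) (hθ : 0 < θ) (t : ℝ) :
    θ * Real.exp t / (1 + Real.exp t)^2 ≤ θ / 4 ∧
    (t ≠ 0 → θ * Real.exp t / (1 + Real.exp t)^2 < θ / 4) := by
  have he : 0 < Real.exp t := Real.exp_pos t
  set e := Real.exp t with hE
  constructor
  · rw [div_le_div_iff₀ (by positivity) (by norm_num)]
    nlinarith [sq_nonneg (1 - e)]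
  · intro ht
    have hne : e ≠ 1 := by
      rw [hE, Ne, Real.exp_eq_one_iff]; exact ht
    have h1e : (1 : ℝ) - e ≠ 0 := sub_ne_zero.2 fun h => hne h.symm
    have : (0:ℝ) < (1 - e)^2 := lt_of_le_of_ne (sq_nonneg _) (Ne.symm (pow_ne_zero 2 h1e))
    rw [div_lt_div_iff₀ (by positivity) (by norm_num)]
    nlinarith

lemma fLogP_cont (θ xs : ℝ) : Continuous (fLogP θ xs) :=
  continuous_iff_continuousAt.2 fun x => (fLogP_hasDeriv θ xs x).continuousAt

lemma fLogP_pos (θ xs x : ℝ) : 0 < fLogP θ xs x := by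
  unfold fLogP; positivity

lemma fLogP_lt_one (θ xs x : ℝ) : fLogP θ xs x < 1 := by
  unfold fLogP
  rw [div_lt_one (by positivity)]
  linarith [Real.exp_pos (-θ * (x - xs))]

lemma slope_lt (θ xs : ℝ) (hθ : 0 < θ) {x y : ℝ} (hxy : x < y) :
    fLogP θ xs y - fLogP θ xs x < θ / 4 * (y - x) := by
  set f := fLogP θ xs
  set d : ℝ → ℝ := fun u => θ * Real.exp (-θ * (u - xs)) / (1 + Real.exp (-θ * (u - xs)))^2
  have hd : ∀ u, HasDerivAt f (d u) u := fun u => fLogP_hasDeriv θ xs u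
  have hdb : ∀ u, d u ≤ θ / 4 := fun u => (dbound θ hθ _).1
  have hdbs : ∀ u, u ≠ xs → d u < θ / 4 := by
    intro u hu
    refine (dbound θ hθ _).2 ?_
    intro h
    apply hu
    have : u - xs = 0 := by
      rcases mul_eq_zero.1 h with h' | h'
      · exact absurd (neg_eq_zero.1 h') hθ.ne'
      · exact h'
    linarith
  set m := (x + y) / 2
  have hxm : x < m := by simp only [m]; linarith
  have hmy : m < y := by simp only [m]; linarith
  obtain ⟨ξ₁, hξ₁, he₁⟩ := exists_hasDerivAt_eq_slope f d hxm
    ((fLogP_cont θ xs).continuousOn) (fun u _ => hd u)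
  obtain ⟨ξ₂, hξ₂, he₂⟩ := exists_hasDerivAt_eq_slope f d hmy
    ((fLogP_cont θ xs).continuousOn) (fun u _ => hd u)
  have h1 : f m - f x = d ξ₁ * (m - x) := by
    rw [he₁, div_mul_cancel₀ _ (sub_ne_zero.2 hxm.ne')]
  have h2 : f y - f m = d ξ₂ * (y - m) := by
    rw [he₂, div_mul_cancel₀ _ (sub_ne_zero.2 hmy.ne')]
  have hlt : ξ₁ < ξ₂ := lt_trans hξ₁.2 hξ₂.1
  have key : d ξ₁ * (m - x) + d ξ₂ * (y - m) < θ / 4 * (y - x) := by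
    rcases eq_or_ne ξ₁ xs with h | h
    · have h2' : ξ₂ ≠ xs := by rw [← h]; exact hlt.ne'
      have := hdbs ξ₂ h2'
      have := hdb ξ₁
      nlinarith
    · have := hdbs ξ₁ h
      have := hdb ξ₂
      nlinarith
  linarith

lemma phi_mul (α β q : ℝ) (hD : 1 - α - β ≠ 0) (f : ℝ → ℝ) (x : ℝ) :
    (1 - α - β) * phiSync α β q f x = (1 - α - β) * f x - (1 - α) * x + β * q := by
  unfold phiSync; field_simp

lemma Fmap_const (N : ℕ) (hN : (N : ℝ) ≠ 0) (α β q : ℝ) (hD : 1 - α - β ≠ 0)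
    (f : ℝ → ℝ) (c : ℝ) :
    Fmap N α β q f (fun _ => c) = fun _ => (1 - α - β) * phiSync α β q f c := by
  funext h
  have hsum : ∑ _i : Fin N, c = (N : ℝ) * c := by
    simp [Finset.sum_const, mul_comm]
  rw [Fmap, hsum, phi_mul α β q hD, inv_mul_cancel_left₀ hN]
  ring

/-- for `f = f_LogP` with `θ/4 ≤ (1−α)/(1−α−β)`, the function `φ` is strictly
decreasing on `[0,1]` and has a unique zero `z₀`, which lies in `(0,1)`; hence `F` has the
unique synchronization zero point `z₀·(1,…,1)`. -/
theorem stmt9 (N : ℕ) (hN : 1 ≤ N) (α β q : ℝ)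
    (hα : α ∈ Set.Ico (0 : ℝ) 1) (hβ : β ∈ Set.Ico (0 : ℝ) 1)
    (hαβ : α + β ∈ Set.Ioo (0 : ℝ) 1) (hq : q ∈ Set.Ioc (0 : ℝ) 1)
    (θ xs : ℝ) (hθ : 0 < θ) (hxs : xs ∈ Set.Ioo (0 : ℝ) 1)
    (hcase : θ / 4 ≤ (1 - α) / (1 - α - β)) :
    StrictAntiOn (phiSync α β q (fLogP θ xs)) (Set.Icc 0 1) ∧
    ∃ z₀ ∈ Set.Ioo (0 : ℝ) 1, phiSync α β q (fLogP θ xs) z₀ = 0 ∧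
      (∀ x ∈ Set.Icc (0 : ℝ) 1, phiSync α β q (fLogP θ xs) x = 0 → x = z₀) ∧
      (fun _ : Fin N => z₀) ∈ ZeroSet N α β q (fLogP θ xs) ∧
      ∀ z ∈ ZeroSet N α β q (fLogP θ xs), (∀ h j, z h = z j) →
        z = fun _ => z₀ := by
  have hD : (0 : ℝ) < 1 - α - β := by linarith [hαβ.2]
  have hDne : (1 : ℝ) - α - β ≠ 0 := hD.ne'
  have hNne : (N : ℝ) ≠ 0 := Nat.cast_ne_zero.2 (by omega)
  set f := fLogP θ xs with hf
  set φ := phiSync α β q f with hφ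
  -- strict antitonicity
  have hanti : StrictAntiOn φ (Set.Icc 0 1) := by
    intro x _ y _ hxy
    have hs := slope_lt θ xs hθ hxy
    have hc : θ / 4 * (y - x) ≤ (1 - α) / (1 - α - β) * (y - x) :=
      mul_le_mul_of_nonneg_right hcase (by linarith)
    have he : (1 - α) * y / (1 - α - β) - (1 - α) * x / (1 - α - β)
        = (1 - α) / (1 - α - β) * (y - x) := by field_simp
    simp only [hφ, phiSync]
    have : f y - f x < (1 - α) * y / (1 - α - β) - (1 - α) * x / (1 - α - β) := by
      rw [he]; linarith
    linarith
  refine ⟨hanti, ?_⟩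
  -- endpoint values
  have hphi0 : 0 < φ 0 := by
    have h1 : 0 < fLogP θ xs 0 := fLogP_pos θ xs 0
    have h2 : 0 ≤ β * q / (1 - α - β) := by
      apply div_nonneg _ hD.le
      exact mul_nonneg hβ.1 hq.1.le
    simp only [hφ, phiSync, hf]
    rw [mul_zero, zero_div]
    linarith
  have hphi1 : φ 1 < 0 := by
    have h1 : fLogP θ xs 1 < 1 := fLogP_lt_one θ xs 1
    have hrepr : φ 1 = ((fLogP θ xs 1) * (1 - α - β) - (1 - α) + β * q) / (1 - α - β) := by
      simp only [hφ, phiSync, hf]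
      field_simp
    rw [hrepr]
    apply div_neg_of_neg_of_pos _ hD
    nlinarith [hβ.1, hq.2, hD]
  -- continuity
  have hcont : Continuous φ := by
    simp only [hφ, phiSync, hf]
    exact (((fLogP_cont θ xs).sub
      ((continuous_const.mul continuous_id).div_const _)).add continuous_const)
  -- IVT
  have hmem : (0 : ℝ) ∈ Set.Ioo (φ 1) (φ 0) := ⟨hphi1, hphi0⟩
  obtain ⟨z₀, hz₀, hz₀0⟩ := intermediate_value_Ioo' (by norm_num : (0:ℝ) ≤ 1)
    hcont.continuousOn hmem
  have hz₀Icc : z₀ ∈ Set.Icc (0 : ℝ) 1 := Set.mem_Icc_of_Ioo hz₀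
  have huniq : ∀ x ∈ Set.Icc (0 : ℝ) 1, φ x = 0 → x = z₀ := by
    intro x hx hx0
    exact hanti.injOn hx hz₀Icc (by rw [hx0, hz₀0])
  refine ⟨z₀, hz₀, hz₀0, huniq, ?_, ?_⟩
  · refine ⟨fun _ => hz₀Icc, ?_⟩
    rw [Fmap_const N hNne α β q hDne f z₀]
    funext h
    simp only [← hφ, hz₀0, mul_zero, Pi.zero_apply]
  · intro z hz hconst
    have h0 : Fin N := ⟨0, by omega⟩
    set c := z h0 with hc
    have hzc : z = fun _ => c := funext fun j => hconst j h0
    have hφc : φ c = 0 := by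
      have hFz := hz.2
      rw [hzc, Fmap_const N hNne α β q hDne f c] at hFz
      have := congrFun hFz h0
      have h2 : (1 - α - β) * φ c = 0 := this
      rcases mul_eq_zero.1 h2 with h | h
      · exact absurd h hDne
      · exact h
    have : c = z₀ := huniq c (hz.1 h0) hφc
    rw [hzc, this]

end
end

section
/- (Remark 3.8.) Let g(x) = x·e^{−x}/(1+e^{−x})² for x ≥ 0. Then g(x) < 1/4 for all x ≥ 0. Moreover, for f = f_LogP one has |x − x*|·f'(x) = g(θ|x − x*|) for all x ∈ [0,1]; consequently, if min{x*, 1−x*} ≥ (1−α−β)/(4(1−α)), then max{f'(0), f'(1)} < (1−α)/(1−α−β). -/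
noncomputable section

/-- The derivative of `f_LogP`. -/
def fLogP' (θ xs x : ℝ) : ℝ :=
  θ * Real.exp (-θ * (x - xs)) / (1 + Real.exp (-θ * (x - xs))) ^ 2

/-- The auxiliary function `g(x) = x·e^{−x}/(1+e^{−x})²`. -/
def gAux (x : ℝ) : ℝ := x * Real.exp (-x) / (1 + Real.exp (-x)) ^ 2

lemma cubic_le_exp {x : ℝ} (hx : 0 ≤ x) : 1 + x + x ^ 2 / 2 + x ^ 3 / 6 ≤ Real.exp x := by
  have h := Real.sum_le_exp_of_nonneg hx 4
  simp [Finset.sum_range_succ, Nat.factorial] at h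
  nlinarith [h]

lemma gAux_lt {x : ℝ} (hx : 0 ≤ x) : gAux x < 1 / 4 := by
  have ha : 0 < Real.exp (-x) := Real.exp_pos _
  have hb : 1 + x + x ^ 2 / 2 + x ^ 3 / 6 ≤ Real.exp x := cubic_le_exp hx
  have hab : Real.exp (-x) * Real.exp x = 1 := by
    rw [← Real.exp_add]; simp
  have hden : (0:ℝ) < (1 + Real.exp (-x)) ^ 2 := by positivity
  rw [gAux, div_lt_div_iff₀ hden (by norm_num)]
  -- suffices: 4 * x * exp(-x) < (1 + exp(-x))^2, i.e. (mult by exp x) 4x < exp x + 2 + exp(-x)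
  have key : x ^ 3 + 3 * x ^ 2 - 18 * x + 18 > 0 := by
    nlinarith [sq_nonneg (x - 33/20), hx, sq_nonneg x]
  nlinarith [mul_pos ha (Real.exp_pos x), sq_nonneg (1 - Real.exp (-x)), hb, hab, ha,
    mul_le_mul_of_nonneg_left hb ha.le]

lemma exp_sym (u : ℝ) : Real.exp (-u) / (1 + Real.exp (-u)) ^ 2
    = Real.exp (-|u|) / (1 + Real.exp (-|u|)) ^ 2 := by
  rcases abs_cases u with ⟨h, _⟩ | ⟨h, _⟩
  · rw [h]
  · rw [h]
    have h1 : Real.exp (-u) = (Real.exp u)⁻¹ := by rw [← Real.exp_neg]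
    have h2 : Real.exp (- -u) = Real.exp u := by ring_nf
    rw [h1, h2]
    have he : Real.exp u ≠ 0 := (Real.exp_pos u).ne'
    field_simp
    ring

/-- Remark 3.8: `g < 1/4` on `[0,∞)`, `|x−x*|·f'(x) = g(θ|x−x*|)` for
`f = f_LogP`, and consequently if `min{x*,1−x*} ≥ (1−α−β)/(4(1−α))`, then
`max{f'(0), f'(1)} < (1−α)/(1−α−β)`. -/
theorem stmt11 (α β : ℝ)
    (hα : α ∈ Set.Ico (0 : ℝ) 1) (hβ : β ∈ Set.Ico (0 : ℝ) 1)
    (hαβ : α + β ∈ Set.Ioo (0 : ℝ) 1)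
    (θ xs : ℝ) (hθ : 0 < θ) (hxs : xs ∈ Set.Ioo (0 : ℝ) 1) :
    (∀ x : ℝ, HasDerivAt (fLogP θ xs) (fLogP' θ xs x) x) ∧
    (∀ x : ℝ, 0 ≤ x → gAux x < 1 / 4) ∧
    (∀ x ∈ Set.Icc (0 : ℝ) 1, |x - xs| * fLogP' θ xs x = gAux (θ * |x - xs|)) ∧
    ((1 - α - β) / (4 * (1 - α)) ≤ min xs (1 - xs) →
      max (fLogP' θ xs 0) (fLogP' θ xs 1) < (1 - α) / (1 - α - β)) := by
  have hderiv : ∀ x : ℝ, HasDerivAt (fLogP θ xs) (fLogP' θ xs x) x := by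
    intro x
    have h1 : HasDerivAt (fun x : ℝ => -θ * (x - xs)) (-θ) x := by
      simpa using ((hasDerivAt_id x).sub_const xs).const_mul (-θ)
    have h2 := h1.exp
    have h3 := h2.const_add 1
    have hne : 1 + Real.exp (-θ * (x - xs)) ≠ 0 := by positivity
    have h4 := (hasDerivAt_const x (1:ℝ)).div h3 hne
    refine HasDerivAt.congr_deriv (f := fLogP θ xs) h4 ?_
    rw [fLogP']
    field_simp
    ring
  have hg : ∀ x : ℝ, 0 ≤ x → gAux x < 1 / 4 := fun x hx => gAux_lt hx
  have hid : ∀ x : ℝ, |x - xs| * fLogP' θ xs x = gAux (θ * |x - xs|) := by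
    intro x
    rw [fLogP', gAux]
    have h := exp_sym (θ * (x - xs))
    have habs : |θ * (x - xs)| = θ * |x - xs| := by
      rw [abs_mul, abs_of_pos hθ]
    rw [habs] at h
    have : -θ * (x - xs) = -(θ * (x - xs)) := by ring
    rw [this]
    linear_combination (|x - xs| * θ) * h
  refine ⟨hderiv, hg, fun x _ => hid x, fun hmin => ?_⟩
  have hxs0 : 0 < xs := hxs.1
  have hxs1 : 0 < 1 - xs := by linarith [hxs.2]
  have hA : 0 < 1 - α := by linarith [hα.2]
  have hAB : 0 < 1 - α - β := by linarith [hαβ.2]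
  have hbound : ∀ y : ℝ, 0 < y → (1 - α - β) / (4 * (1 - α)) ≤ y →
      ∀ x : ℝ, |x - xs| = y → fLogP' θ xs x < (1 - α) / (1 - α - β) := by
    intro y hy hly x hxy
    have h1 := hid x
    rw [hxy] at h1
    have h2 : gAux (θ * y) < 1 / 4 := hg _ (by positivity)
    have h3 : y * fLogP' θ xs x < 1 / 4 := h1 ▸ h2
    have h4 : fLogP' θ xs x < 1 / (4 * y) := by
      rw [lt_div_iff₀ (by positivity)]
      nlinarith
    refine h4.trans_le ?_
    rw [div_le_div_iff₀ (by positivity) hAB]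
    have : (1 - α - β) ≤ y * (4 * (1 - α)) := by
      rw [div_le_iff₀ (by positivity)] at hly
      linarith
    linarith
  have h0 : fLogP' θ xs 0 < (1 - α) / (1 - α - β) := by
    apply hbound xs hxs0 (le_trans hmin (min_le_left _ _)) 0
    rw [abs_of_nonpos (by linarith)]; ring
  have h1 : fLogP' θ xs 1 < (1 - α) / (1 - α - β) := by
    apply hbound (1 - xs) hxs1 (le_trans hmin (min_le_right _ _)) 1
    rw [abs_of_nonneg (by linarith)]
  exact max_lt h0 h1

end
end

section
/- (Corollary on eigenvalues, two-block case.) Let N ≥ 2, c > 0, D₁ ≠ D₂ real, and let d₁,…,d_N ∈ {D₁, D₂} with exactly N₁ ∈ {1,…,N−1} indices equal to D₁ and N₂ = N − N₁ equal to D₂. Let A = c²·J + diag(d₁,…,d_N), J the N×N all-ones matrix. Then det(A − λ·Id) = (D₁ − λ)^{N₁−1}·(D₂ − λ)^{N₂−1}·(λ² − (D₁+D₂+c²N)λ + D₁D₂ + c²N₁D₂ + c²N₂D₁) for all λ ∈ ℝ. Moreover: (a) if D₁ ≥ 0 and D₂ ≥ 0 then all eigenvalues of A are ≥ 0; (b)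 if D₁ = 0 and D₂ < 0 (or vice versa) then A has a strictly positive eigenvalue; (c) if D₁ < 0 and D₂ < 0, then all eigenvalues of A are ≤ 0 if and only if D₁ + D₂ + c²N < 0 and D₁D₂ + c²N₁D₂ + c²N₂D₁ ≥ 0. -/
noncomputable section

/-- The matrix `A = c²·J + diag(d₁,…,d_N)`, where `J` is the all-ones matrix. -/
def blockMat (N : ℕ) (c : ℝ) (d : Fin N → ℝ) : Matrix (Fin N) (Fin N) ℝ :=
  Matrix.of (fun _ _ => c ^ 2) + Matrix.diagonal d

lemma det_diag_add_const {N : ℕ} (e : Fin N → ℝ) (he : ∀ i, e i ≠ 0) (t : ℝ) :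
    (Matrix.of (fun _ _ : Fin N => t) + Matrix.diagonal e).det
      = (∏ i, e i) * (1 + ∑ i, t / e i) := by
  have key : Matrix.of (fun _ _ : Fin N => t) + Matrix.diagonal e
      = Matrix.diagonal e * (1 + Matrix.replicateCol Unit (fun i => t / e i) * Matrix.replicateRow Unit (1 : Fin N → ℝ)) := by
    rw [mul_add, mul_one]
    ext i j
    simp [Matrix.mul_apply, Matrix.diagonal_apply, Matrix.replicateCol, Matrix.replicateRow, add_comm,
      Finset.sum_ite_eq, div_eq_mul_inv]
    field_simp [he i]
  rw [key, Matrix.det_mul, Matrix.det_one_add_replicateCol_mul_replicateRow, Matrix.det_diagonal]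
  simp [dotProduct]

lemma det_generic (N : ℕ) (c : ℝ)
    (D₁ D₂ : ℝ) (d : Fin N → ℝ)
    (hd : ∀ i, d i = D₁ ∨ d i = D₂)
    (N₁ N₂ : ℕ)
    (hN₁ : (Finset.univ.filter fun i => d i = D₁).card = N₁)
    (hN₁pos : 1 ≤ N₁) (hN₂pos : 1 ≤ N₂) (hsum : N₁ + N₂ = N)
    (lam : ℝ) (ha : D₁ - lam ≠ 0) (hb : D₂ - lam ≠ 0) :
    (blockMat N c d - lam • (1 : Matrix (Fin N) (Fin N) ℝ)).det =
        (D₁ - lam) ^ (N₁ - 1) * (D₂ - lam) ^ (N₂ - 1) *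
          (lam ^ 2 - (D₁ + D₂ + c ^ 2 * N) * lam +
            (D₁ * D₂ + c ^ 2 * N₁ * D₂ + c ^ 2 * N₂ * D₁)) := by
  set e : Fin N → ℝ := fun i => d i - lam with he_def
  have hmat : blockMat N c d - lam • (1 : Matrix (Fin N) (Fin N) ℝ)
      = Matrix.of (fun _ _ : Fin N => c ^ 2) + Matrix.diagonal e := by
    ext i j
    by_cases h : i = j <;>
      (simp [blockMat, Matrix.diagonal_apply, Matrix.one_apply, h, he_def]; try ring)
  have he : ∀ i, e i ≠ 0 := by
    intro i
    rcases hd i with h | h <;> simp [he_def, h, ha, hb]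
  rw [hmat, det_diag_add_const e he]
  have hcardc : (Finset.univ.filter fun i => ¬ d i = D₁).card = N₂ := by
    have := Finset.card_filter_add_card_filter_not
      (s := (Finset.univ : Finset (Fin N))) (p := fun i => d i = D₁)
    simp only [Finset.card_univ, Fintype.card_fin] at this
    omega
  have hprod : (∏ i, e i) = (D₁ - lam) ^ N₁ * (D₂ - lam) ^ N₂ := by
    rw [← Finset.prod_filter_mul_prod_filter_not Finset.univ (fun i => d i = D₁)]
    rw [Finset.prod_congr rfl (fun i hi => by
        simp only [Finset.mem_filter] at hi
        show e i = D₁ - lam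
        simp [he_def, hi.2]),
      Finset.prod_congr (s₂ := Finset.univ.filter fun i => ¬ d i = D₁) rfl (fun i hi => by
        simp only [Finset.mem_filter] at hi
        show e i = D₂ - lam
        rcases hd i with h | h
        · exact absurd h hi.2
        · simp [he_def, h]),
      Finset.prod_const, Finset.prod_const, hN₁, hcardc]
  have hsum2 : (∑ i, c ^ 2 / e i)
      = N₁ * (c ^ 2 / (D₁ - lam)) + N₂ * (c ^ 2 / (D₂ - lam)) := by
    rw [← Finset.sum_filter_add_sum_filter_not Finset.univ (fun i => d i = D₁)]
    rw [Finset.sum_congr rfl (fun i hi => by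
        simp only [Finset.mem_filter] at hi
        show c ^ 2 / e i = c ^ 2 / (D₁ - lam)
        simp [he_def, hi.2]),
      Finset.sum_congr (s₂ := Finset.univ.filter fun i => ¬ d i = D₁) rfl (fun i hi => by
        simp only [Finset.mem_filter] at hi
        show c ^ 2 / e i = c ^ 2 / (D₂ - lam)
        rcases hd i with h | h
        · exact absurd h hi.2
        · simp [he_def, h]),
      Finset.sum_const, Finset.sum_const, hN₁, hcardc]
    simp [nsmul_eq_mul]
  rw [hprod, hsum2]
  obtain ⟨m, rfl⟩ : ∃ m, N₁ = m + 1 := ⟨N₁ - 1, by omega⟩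
  obtain ⟨k, rfl⟩ : ∃ k, N₂ = k + 1 := ⟨N₂ - 1, by omega⟩
  have hN : (N : ℝ) = (m + 1 : ℕ) + (k + 1 : ℕ) := by
    rw [← hsum]; push_cast; ring
  rw [hN]
  simp only [Nat.add_sub_cancel]
  field_simp
  ring

lemma det_ext (N : ℕ) (f : ℝ → ℝ)
    (A : Matrix (Fin N) (Fin N) ℝ) (hf : Continuous f)
    (D₁ D₂ : ℝ)
    (h : ∀ lam : ℝ, D₁ - lam ≠ 0 → D₂ - lam ≠ 0 →
      (A - lam • (1 : Matrix (Fin N) (Fin N) ℝ)).det = f lam) :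
    ∀ lam : ℝ, (A - lam • (1 : Matrix (Fin N) (Fin N) ℝ)).det = f lam := by
  have hg : Continuous (fun lam : ℝ => (A - lam • (1 : Matrix (Fin N) (Fin N) ℝ)).det) := by
    apply Continuous.matrix_det
    exact continuous_const.sub ((continuous_id).smul continuous_const)
  have hdense : Dense ({D₁, D₂} : Set ℝ)ᶜ :=
    Set.Countable.dense_compl ℝ ((Set.finite_singleton D₂).insert D₁).countable
  have := Continuous.ext_on hdense hg hf (fun lam hlam => by
    simp only [Set.mem_compl_iff, Set.mem_insert_iff, Set.mem_singleton_iff, not_or] at hlam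
    exact h lam (sub_ne_zero.2 (Ne.symm hlam.1)) (sub_ne_zero.2 (Ne.symm hlam.2)))
  exact fun lam => congrFun this lam

lemma eig_iff_det (N : ℕ) (A : Matrix (Fin N) (Fin N) ℝ) (lam : ℝ) :
    (∃ v : Fin N → ℝ, v ≠ 0 ∧ A.mulVec v = lam • v) ↔
      (A - lam • (1 : Matrix (Fin N) (Fin N) ℝ)).det = 0 := by
  rw [← Matrix.exists_mulVec_eq_zero_iff]
  constructor
  · rintro ⟨v, hv, hav⟩
    exact ⟨v, hv, by
      rw [Matrix.sub_mulVec, Matrix.smul_mulVec, Matrix.one_mulVec, hav, sub_self]⟩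
  · rintro ⟨v, hv, hav⟩
    refine ⟨v, hv, ?_⟩
    rw [Matrix.sub_mulVec, Matrix.smul_mulVec, Matrix.one_mulVec, sub_eq_zero] at hav
    exact hav

lemma blockMat_mulVec (N : ℕ) (c : ℝ) (d : Fin N → ℝ) (v : Fin N → ℝ) (i : Fin N) :
    (blockMat N c d).mulVec v i = c ^ 2 * (∑ j, v j) + d i * v i := by
  simp [blockMat, Matrix.mulVec, dotProduct, add_mul, Finset.sum_add_distrib,
    Matrix.diagonal_apply, ite_mul, Finset.sum_ite_eq, Finset.mul_sum]

lemma rayleigh (N : ℕ) (c : ℝ) (D₁ D₂ : ℝ) (hD₁ : 0 ≤ D₁) (hD₂ : 0 ≤ D₂)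
    (d : Fin N → ℝ) (hd : ∀ i, d i = D₁ ∨ d i = D₂)
    (lam : ℝ) (v : Fin N → ℝ) (hv : v ≠ 0)
    (heig : ∀ i, c ^ 2 * (∑ j, v j) + d i * v i = lam * v i) : 0 ≤ lam := by
  have key : c ^ 2 * (∑ j, v j) ^ 2 + (∑ i, d i * v i ^ 2) = lam * ∑ i, v i ^ 2 := by
    calc c ^ 2 * (∑ j, v j) ^ 2 + (∑ i, d i * v i ^ 2)
        = (∑ i, v i * (c ^ 2 * ∑ j, v j)) + ∑ i, v i * (d i * v i) := by
          rw [← Finset.sum_mul]; ring_nf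
          congr 1 <;> exact Finset.sum_congr rfl fun i _ => by ring
      _ = ∑ i, v i * (lam * v i) := by
          rw [← Finset.sum_add_distrib]
          exact Finset.sum_congr rfl fun i _ => by rw [← mul_add, heig i]
      _ = lam * ∑ i, v i ^ 2 := by
          rw [Finset.mul_sum]; exact Finset.sum_congr rfl fun i _ => by ring
  have hv2 : 0 < ∑ i, v i ^ 2 := by
    obtain ⟨i, hi⟩ := Function.ne_iff.1 hv
    exact Finset.sum_pos' (fun j _ => sq_nonneg _)
      ⟨i, Finset.mem_univ i, (sq_nonneg _).lt_of_ne (Ne.symm (pow_ne_zero 2 hi))⟩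
  have hdv : 0 ≤ ∑ i, d i * v i ^ 2 :=
    Finset.sum_nonneg fun i _ =>
      mul_nonneg (by rcases hd i with h | h <;> simp [h, hD₁, hD₂]) (sq_nonneg _)
  nlinarith [sq_nonneg (∑ j, v j)]

lemma quad_root (T P Δ : ℝ) (hΔ : Δ = T ^ 2 - 4 * P) (hΔpos : 0 < Δ) :
    ∃ lam : ℝ, lam ^ 2 - T * lam + P = 0 ∧ ((0 ≤ T ∨ P < 0) → 0 < lam) := by
  set s := Real.sqrt Δ with hs
  have hs2 : s ^ 2 = Δ := Real.sq_sqrt hΔpos.le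
  have hspos : 0 < s := Real.sqrt_pos.2 hΔpos
  refine ⟨(T + s) / 2, by nlinarith, ?_⟩
  rintro (h | h)
  · nlinarith
  · nlinarith [Real.sqrt_nonneg Δ, abs_nonneg T, sq_abs T, le_abs_self T, neg_abs_le T]

/-- two-block case: determinant factorization and sign properties of the
eigenvalues of `A = c²·J + diag(d₁,…,d_N)` when the `dᵢ` take exactly the two values
`D₁ ≠ D₂`, with `N₁` entries equal to `D₁` and `N₂ = N − N₁` entries equal to `D₂`. -/
theorem stmt18 (N : ℕ) (hN : 2 ≤ N) (c : ℝ) (hc : 0 < c)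
    (D₁ D₂ : ℝ) (hD : D₁ ≠ D₂) (d : Fin N → ℝ)
    (hd : ∀ i, d i = D₁ ∨ d i = D₂)
    (N₁ N₂ : ℕ)
    (hN₁ : (Finset.univ.filter fun i => d i = D₁).card = N₁)
    (hN₁pos : 1 ≤ N₁) (hN₁lt : N₁ ≤ N - 1) (hN₂ : N₂ = N - N₁) :
    (∀ lam : ℝ,
      (blockMat N c d - lam • (1 : Matrix (Fin N) (Fin N) ℝ)).det =
        (D₁ - lam) ^ (N₁ - 1) * (D₂ - lam) ^ (N₂ - 1) *
          (lam ^ 2 - (D₁ + D₂ + c ^ 2 * N) * lam +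
            (D₁ * D₂ + c ^ 2 * N₁ * D₂ + c ^ 2 * N₂ * D₁))) ∧
    (0 ≤ D₁ → 0 ≤ D₂ →
      ∀ (lam : ℝ) (v : Fin N → ℝ), v ≠ 0 →
        (blockMat N c d).mulVec v = lam • v → 0 ≤ lam) ∧
    ((D₁ = 0 ∧ D₂ < 0) ∨ (D₂ = 0 ∧ D₁ < 0) →
      ∃ lam : ℝ, 0 < lam ∧ ∃ v : Fin N → ℝ, v ≠ 0 ∧
        (blockMat N c d).mulVec v = lam • v) ∧
    (D₁ < 0 → D₂ < 0 →
      ((∀ (lam : ℝ) (v : Fin N → ℝ), v ≠ 0 →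
          (blockMat N c d).mulVec v = lam • v → lam ≤ 0) ↔
        (D₁ + D₂ + c ^ 2 * N < 0 ∧
          0 ≤ D₁ * D₂ + c ^ 2 * N₁ * D₂ + c ^ 2 * N₂ * D₁))) := by
  have hN₂pos : 1 ≤ N₂ := by omega
  have hsum : N₁ + N₂ = N := by
    have h1 : N₁ ≤ N := by
      calc N₁ = (Finset.univ.filter fun i => d i = D₁).card := hN₁.symm
        _ ≤ (Finset.univ : Finset (Fin N)).card := Finset.card_filter_le _ _
        _ = N := by simp
    omega
  -- part 1
  have part1 : ∀ lam : ℝ,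
      (blockMat N c d - lam • (1 : Matrix (Fin N) (Fin N) ℝ)).det =
        (D₁ - lam) ^ (N₁ - 1) * (D₂ - lam) ^ (N₂ - 1) *
          (lam ^ 2 - (D₁ + D₂ + c ^ 2 * N) * lam +
            (D₁ * D₂ + c ^ 2 * N₁ * D₂ + c ^ 2 * N₂ * D₁)) := by
    apply det_ext N _ (blockMat N c d) (by fun_prop) D₁ D₂
    intro lam ha hb
    exact det_generic N c D₁ D₂ d hd N₁ N₂ hN₁ hN₁pos hN₂pos hsum lam ha hb
  have hNR : (N : ℝ) = (N₁ : ℝ) + (N₂ : ℝ) := by rw [← hsum]; push_cast; ring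
  have hN₁R : (1 : ℝ) ≤ (N₁ : ℝ) := by exact_mod_cast hN₁pos
  have hN₂R : (1 : ℝ) ≤ (N₂ : ℝ) := by exact_mod_cast hN₂pos
  have hc2 : (0 : ℝ) < c ^ 2 := pow_pos hc 2
  have hΔpos : 0 < (D₁ + D₂ + c ^ 2 * N) ^ 2 -
      4 * (D₁ * D₂ + c ^ 2 * N₁ * D₂ + c ^ 2 * N₂ * D₁) := by
    have key : (D₁ + D₂ + c ^ 2 * ((N₁ : ℝ) + (N₂ : ℝ))) ^ 2 -
        4 * (D₁ * D₂ + c ^ 2 * N₁ * D₂ + c ^ 2 * N₂ * D₁)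
        = (D₁ + c ^ 2 * N₁ - (D₂ + c ^ 2 * N₂)) ^ 2
          + 4 * (c ^ 2 * N₁) * (c ^ 2 * N₂) := by ring
    rw [hNR, key]
    have h4 : 0 < 4 * (c ^ 2 * (N₁ : ℝ)) * (c ^ 2 * (N₂ : ℝ)) :=
      mul_pos (mul_pos (by norm_num) (mul_pos hc2 (by linarith))) (mul_pos hc2 (by linarith))
    nlinarith [sq_nonneg (D₁ + c ^ 2 * (N₁ : ℝ) - (D₂ + c ^ 2 * (N₂ : ℝ)))]
  obtain ⟨lp, hlp0, hlppos⟩ := quad_root (D₁ + D₂ + c ^ 2 * N)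
    (D₁ * D₂ + c ^ 2 * N₁ * D₂ + c ^ 2 * N₂ * D₁) _ rfl hΔpos
  have hdetlp : (blockMat N c d - lp • (1 : Matrix (Fin N) (Fin N) ℝ)).det = 0 := by
    rw [part1 lp, hlp0, mul_zero]
  refine ⟨part1, ?_, ?_, ?_⟩
  -- part 2
  · intro hD₁ hD₂ lam v hv heig
    refine rayleigh N c D₁ D₂ hD₁ hD₂ d hd lam v hv fun i => ?_
    rw [← blockMat_mulVec, heig]; rfl
  -- part 3
  · rintro (⟨h1, h2⟩ | ⟨h1, h2⟩)
    · have hP : D₁ * D₂ + c ^ 2 * N₁ * D₂ + c ^ 2 * N₂ * D₁ < 0 := by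
        rw [h1]
        have : c ^ 2 * (N₁ : ℝ) * D₂ < 0 :=
          mul_neg_of_pos_of_neg (by nlinarith) h2
        nlinarith
      obtain ⟨v, hv, hav⟩ := (eig_iff_det N (blockMat N c d) lp).2 hdetlp
      exact ⟨lp, hlppos (Or.inr hP), v, hv, hav⟩
    · have hP : D₁ * D₂ + c ^ 2 * N₁ * D₂ + c ^ 2 * N₂ * D₁ < 0 := by
        rw [h1]
        have : c ^ 2 * (N₂ : ℝ) * D₁ < 0 :=
          mul_neg_of_pos_of_neg (by nlinarith) h2
        nlinarith
      obtain ⟨v, hv, hav⟩ := (eig_iff_det N (blockMat N c d) lp).2 hdetlp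
      exact ⟨lp, hlppos (Or.inr hP), v, hv, hav⟩
  -- part 4
  · intro h1 h2
    constructor
    · intro hall
      have hnotpos : ¬ (0 < lp) := by
        intro hpos
        obtain ⟨v, hv, hav⟩ := (eig_iff_det N (blockMat N c d) lp).2 hdetlp
        exact absurd (hall lp v hv hav) (not_le.2 hpos)
      constructor
      · by_contra hT
        push_neg at hT
        exact hnotpos (hlppos (Or.inl hT))
      · by_contra hP
        push_neg at hP
        exact hnotpos (hlppos (Or.inr hP))
    · rintro ⟨hT, hP⟩ lam v hv heig
      by_contra hl
      push_neg at hl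
      have hdet : (blockMat N c d - lam • (1 : Matrix (Fin N) (Fin N) ℝ)).det = 0 :=
        (eig_iff_det N (blockMat N c d) lam).1 ⟨v, hv, heig⟩
      rw [part1 lam] at hdet
      have ha : D₁ - lam ≠ 0 := ne_of_lt (by linarith)
      have hb : D₂ - lam ≠ 0 := ne_of_lt (by linarith)
      have hmul : 0 < (-(D₁ + D₂ + c ^ 2 * N)) * lam := mul_pos (by linarith) hl
      have hq : lam ^ 2 - (D₁ + D₂ + c ^ 2 * N) * lam +
          (D₁ * D₂ + c ^ 2 * N₁ * D₂ + c ^ 2 * N₂ * D₁) ≠ 0 :=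
        ne_of_gt (by nlinarith [sq_nonneg lam])
      exact (mul_ne_zero (mul_ne_zero (pow_ne_zero _ ha) (pow_ne_zero _ hb)) hq) hdet

end
end

section
/- (Lemma C.1, finiteness of the zero set for polynomial f.) Let N ≥ 1, let f : ℝ → ℝ be a polynomial of degree d ≥ 2, let α, β ∈ [0,1] with 1 − α − β ≠ 0, and let q ∈ ℝ. Define F_i(z) = α·(1/N)∑_{j=1}^N z_j + βq + (1−α−β) f(z_i) − z_i for z ∈ ℝ^N and i = 1,…,N. Then the set {z ∈ ℝ^N : F_i(z) = 0 for all i = 1,…,N} is finite (indeed, even the set of solutions in ℂ^N has at most d^N elements). -/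
noncomputable section

namespace Stmt19Aux

open Finset

/-- The monomial function `z ↦ ∏ i, z i ^ k i`. -/
def mon {N : ℕ} (k : Fin N → ℕ) (z : Fin N → ℂ) : ℂ := ∏ i, z i ^ k i

lemma mon_bump {N : ℕ} (k : Fin N → ℕ) (j : Fin N) (t : ℕ) (z : Fin N → ℂ) :
    mon (fun i => k i + if i = j then t else 0) z = mon k z * z j ^ t := by
  unfold mon
  simp only [pow_add, pow_ite, pow_zero]
  rw [Finset.prod_mul_distrib, Finset.prod_ite_eq']
  simp

lemma sum_bump {N : ℕ} (k : Fin N → ℕ) (j : Fin N) (t : ℕ) :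
    (∑ i, (k i + if i = j then t else 0)) = (∑ i, k i) + t := by
  rw [Finset.sum_add_distrib, Finset.sum_ite_eq']
  simp

lemma key_card {N : ℕ} (hN : 0 < N) (d : ℕ) (hd : 2 ≤ d) (g : Polynomial ℂ)
    (hgdeg : g.natDegree = d) (ha : g.coeff d ≠ 0) (u : ℂ) (v : Fin N → ℂ)
    (T : Finset (Fin N → ℂ))
    (hT : ∀ z ∈ T, ∀ i, g.eval (z i) = u + ∑ j, v j * z j) :
    T.card ≤ d ^ N := by
  by_contra hcard
  push_neg at hcard
  classical
  have hnli : ¬ LinearIndependent ℂ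
      (fun (z : {x // x ∈ T}) (κ : Fin N → Fin d) =>
        mon (fun i => (κ i : ℕ)) (z : Fin N → ℂ)) := by
    intro h
    have h1 := h.fintype_card_le_finrank
    rw [Module.finrank_fintype_fun_eq_card] at h1
    simp only [Fintype.card_coe, Fintype.card_fun, Fintype.card_fin] at h1
    omega
  obtain ⟨c, hcsum, z0, hz0⟩ := Fintype.not_linearIndependent_iff.mp hnli
  set L : (Fin N → ℕ) → ℂ :=
    fun k => ∑ z : {x // x ∈ T}, c z * mon k (z : Fin N → ℂ) with hLdef
  -- restricted monomials vanish
  have hA : ∀ k : Fin N → ℕ, (∀ i, k i < d) → L k = 0 := by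
    intro k hk
    have h2 := congrFun hcsum (fun i => (⟨k i, hk i⟩ : Fin d))
    simp only [Finset.sum_apply, Pi.smul_apply, smul_eq_mul, Pi.zero_apply] at h2
    simpa [hLdef] using h2
  -- the basic algebraic relation on solutions
  have hrel : ∀ z ∈ T, ∀ i : Fin N, z i ^ d * g.coeff d
      = (u + ∑ j, v j * z j) - ∑ m ∈ Finset.range d, g.coeff m * z i ^ m := by
    intro z hz i
    have h1 := hT z hz i
    have h2 : g.eval (z i) = ∑ m ∈ Finset.range (d + 1), g.coeff m * z i ^ m := by
      rw [← hgdeg]; exact Polynomial.eval_eq_sum_range (z i)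
    rw [Finset.sum_range_succ, h1] at h2
    linear_combination -h2
  -- all monomials vanish, by induction on total degree
  have hL0 : ∀ n : ℕ, ∀ k : Fin N → ℕ, (∑ i, k i) ≤ n → L k = 0 := by
    intro n
    induction n with
    | zero =>
      intro k hk
      apply hA
      intro i
      have h3 := Finset.single_le_sum (f := k) (fun _ _ => Nat.zero_le _) (Finset.mem_univ i)
      omega
    | succ n ih =>
      intro k hk
      by_cases hkd : ∀ i, k i < d
      · exact hA k hkd
      · push_neg at hkd
        obtain ⟨i, hi⟩ := hkd
        set k' : Fin N → ℕ := fun j => if j = i then k i - d else k j with hk'def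
        have hkk : ∀ j, k j = k' j + if j = i then d else 0 := by
          intro j
          by_cases hj : j = i
          · subst hj
            simp only [hk'def, if_true, eq_self_iff_true, if_pos]
            omega
          · simp [hk'def, hj]
        have hkfun : k = fun j => k' j + if j = i then d else 0 := funext hkk
        have hmon : ∀ z : Fin N → ℂ, mon k z = mon k' z * z i ^ d := by
          intro z
          rw [hkfun, mon_bump]
        have hsum' : (∑ j, k' j) + d = ∑ j, k j := by
          conv_rhs => rw [hkfun]
          rw [sum_bump]
        have hzid : ∀ z : {x // x ∈ T},
            c z * mon k (z : Fin N → ℂ) * g.coeff d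
            = u * (c z * mon k' (z : Fin N → ℂ))
              + ∑ j, v j * (c z * mon (fun j' => k' j' + if j' = j then 1 else 0) (z : Fin N → ℂ))
              - ∑ m ∈ Finset.range d,
                  g.coeff m * (c z * mon (fun j' => k' j' + if j' = i then m else 0) (z : Fin N → ℂ)) := by
          intro z
          have h5 := hrel (z : Fin N → ℂ) z.2 i
          simp only [mon_bump, pow_one]
          rw [hmon]
          calc c z * (mon k' (z : Fin N → ℂ) * (z : Fin N → ℂ) i ^ d) * g.coeff d
              = c z * mon k' (z : Fin N → ℂ) * ((z : Fin N → ℂ) i ^ d * g.coeff d) := by ring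
            _ = c z * mon k' (z : Fin N → ℂ) *
                ((u + ∑ j, v j * (z : Fin N → ℂ) j)
                  - ∑ m ∈ Finset.range d, g.coeff m * (z : Fin N → ℂ) i ^ m) := by rw [h5]
            _ = u * (c z * mon k' (z : Fin N → ℂ))
                + ∑ j, v j * (c z * (mon k' (z : Fin N → ℂ) * (z : Fin N → ℂ) j))
                - ∑ m ∈ Finset.range d,
                    g.coeff m * (c z * (mon k' (z : Fin N → ℂ) * (z : Fin N → ℂ) i ^ m)) := by
              rw [mul_sub, mul_add, Finset.mul_sum, Finset.mul_sum]
              congr 1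
              · congr 1
                · ring
                · exact Finset.sum_congr rfl fun j _ => by ring
              · exact Finset.sum_congr rfl fun m _ => by ring
        have h6 : L k * g.coeff d
            = u * L k' + ∑ j, v j * L (fun j' => k' j' + if j' = j then 1 else 0)
              - ∑ m ∈ Finset.range d,
                  g.coeff m * L (fun j' => k' j' + if j' = i then m else 0) := by
          simp only [hLdef]
          rw [Finset.sum_mul, Finset.sum_congr rfl fun z _ => hzid z,
            Finset.sum_sub_distrib, Finset.sum_add_distrib]
          congr 1
          · congr 1
            · rw [← Finset.mul_sum]
            · rw [Finset.sum_comm]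
              exact Finset.sum_congr rfl fun j _ => by rw [← Finset.mul_sum]
          · rw [Finset.sum_comm]
            exact Finset.sum_congr rfl fun m _ => by rw [← Finset.mul_sum]
        have e1 : L k' = 0 := ih k' (by omega)
        have e2 : ∀ j, L (fun j' => k' j' + if j' = j then 1 else 0) = 0 := by
          intro j; apply ih; rw [sum_bump]; omega
        have e3 : ∀ m ∈ Finset.range d, L (fun j' => k' j' + if j' = i then m else 0) = 0 := by
          intro m hm
          have hm' := Finset.mem_range.mp hm
          apply ih; rw [sum_bump]; omega
        have h7 : L k * g.coeff d = 0 := by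
          rw [h6, e1, Finset.sum_eq_zero (fun j _ => by rw [e2 j, mul_zero]),
            Finset.sum_eq_zero (fun m hm => by rw [e3 m hm, mul_zero])]
          ring
        exact (mul_eq_zero.mp h7).resolve_right ha
  -- a separating polynomial gives a contradiction
  have hzne : ∀ z' : {x // x ∈ T}, z' ≠ z0 →
      ∃ i, (z' : Fin N → ℂ) i ≠ (z0 : Fin N → ℂ) i := by
    intro z' hne
    by_contra hcon
    push_neg at hcon
    exact hne (Subtype.ext (funext hcon))
  set pick : {x // x ∈ T} → Fin N := fun z' =>
    if h : ∃ i, (z' : Fin N → ℂ) i ≠ (z0 : Fin N → ℂ) i then h.choose else ⟨0, hN⟩ with hpickdef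
  have hpick : ∀ z' : {x // x ∈ T}, z' ≠ z0 →
      (z' : Fin N → ℂ) (pick z') ≠ (z0 : Fin N → ℂ) (pick z') := by
    intro z' hne
    have h := hzne z' hne
    simp only [hpickdef, dif_pos h]
    exact h.choose_spec
  set P : MvPolynomial (Fin N) ℂ :=
    ∏ z' ∈ Finset.univ.erase z0,
      (MvPolynomial.X (pick z') - MvPolynomial.C ((z' : Fin N → ℂ) (pick z'))) with hPdef
  have hevalP : ∀ y : Fin N → ℂ, MvPolynomial.eval y P
      = ∏ z' ∈ Finset.univ.erase z0, (y (pick z') - (z' : Fin N → ℂ) (pick z')) := by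
    intro y
    rw [hPdef, map_prod]
    exact Finset.prod_congr rfl fun z' _ => by
      rw [map_sub, MvPolynomial.eval_X, MvPolynomial.eval_C]
  have hP0 : MvPolynomial.eval (z0 : Fin N → ℂ) P ≠ 0 := by
    rw [hevalP]
    apply Finset.prod_ne_zero_iff.mpr
    intro z' hz'
    exact sub_ne_zero_of_ne (hpick z' (Finset.mem_erase.mp hz').1).symm
  have hPz' : ∀ z' ∈ Finset.univ.erase z0,
      MvPolynomial.eval ((z' : {x // x ∈ T}) : Fin N → ℂ) P = 0 := by
    intro z' hz'
    rw [hevalP]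
    exact Finset.prod_eq_zero hz' (by simp)
  have hsum1 : (∑ z : {x // x ∈ T}, c z * MvPolynomial.eval (z : Fin N → ℂ) P)
      = c z0 * MvPolynomial.eval (z0 : Fin N → ℂ) P := by
    rw [← Finset.sum_erase_add Finset.univ _ (Finset.mem_univ z0),
      Finset.sum_eq_zero (fun z' hz' => by rw [hPz' z' hz', mul_zero]), zero_add]
  have hsum2 : (∑ z : {x // x ∈ T}, c z * MvPolynomial.eval (z : Fin N → ℂ) P) = 0 := by
    have hexp : ∀ z : {x // x ∈ T}, c z * MvPolynomial.eval (z : Fin N → ℂ) P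
        = ∑ k ∈ P.support, P.coeff k * (c z * mon (⇑k) (z : Fin N → ℂ)) := by
      intro z
      rw [MvPolynomial.eval_eq', Finset.mul_sum]
      exact Finset.sum_congr rfl fun k _ => by unfold mon; ring
    rw [Finset.sum_congr rfl fun z _ => hexp z, Finset.sum_comm]
    apply Finset.sum_eq_zero
    intro k _
    rw [← Finset.mul_sum]
    have hk0 : (∑ z : {x // x ∈ T}, c z * mon (⇑k) (z : Fin N → ℂ)) = 0 :=
      hL0 (∑ i, k i) (⇑k) le_rfl
    rw [hk0, mul_zero]
  rw [hsum1] at hsum2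
  rcases mul_eq_zero.mp hsum2 with h | h
  · exact hz0 h
  · exact hP0 h

end Stmt19Aux

/-- Lemma C.1: for a real polynomial `f` of degree `d ≥ 2` and
`F_i(z) = α·(1/N)∑_j z_j + βq + (1−α−β)·f(z_i) − z_i`, the set of real solutions of
`F = 0` is finite; indeed even the set of complex solutions is finite with at most `d^N`
elements. -/
theorem stmt19 (N : ℕ) (hN : 1 ≤ N) (f : Polynomial ℝ) (d : ℕ)
    (hdeg : f.natDegree = d) (hd : 2 ≤ d)
    (α β q : ℝ) (hα : α ∈ Set.Icc (0 : ℝ) 1) (hβ : β ∈ Set.Icc (0 : ℝ) 1)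
    (hαβ : 1 - α - β ≠ 0) :
    {z : Fin N → ℝ | ∀ i,
        α * ((N : ℝ)⁻¹ * ∑ j, z j) + β * q + (1 - α - β) * f.eval (z i) - z i = 0}.Finite ∧
    {z : Fin N → ℂ | ∀ i,
        (α : ℂ) * ((N : ℂ)⁻¹ * ∑ j, z j) + (β : ℂ) * (q : ℂ) +
          ((1 : ℂ) - (α : ℂ) - (β : ℂ)) * (f.map (algebraMap ℝ ℂ)).eval (z i) - z i = 0}.Finite ∧
    Set.ncard {z : Fin N → ℂ | ∀ i,
        (α : ℂ) * ((N : ℂ)⁻¹ * ∑ j, z j) + (β : ℂ) * (q : ℂ) +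
          ((1 : ℂ) - (α : ℂ) - (β : ℂ)) * (f.map (algebraMap ℝ ℂ)).eval (z i) - z i = 0}
      ≤ d ^ N := by
  classical
  set fC : Polynomial ℂ := f.map (algebraMap ℝ ℂ) with hfCdef
  set cc : ℂ := (1 : ℂ) - (α : ℂ) - (β : ℂ) with hccdef
  have hcc : cc ≠ 0 := by
    intro h
    apply hαβ
    have h2 : ((1 - α - β : ℝ) : ℂ) = 0 := by push_cast; rw [← hccdef]; exact h
    exact_mod_cast h2
  have hfC : fC.natDegree = d := by
    rw [hfCdef, Polynomial.natDegree_map_eq_of_injective (algebraMap ℝ ℂ).injective, hdeg]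
  have hfC0 : fC ≠ 0 := by
    intro h
    rw [h, Polynomial.natDegree_zero] at hfC
    omega
  set g : Polynomial ℂ := Polynomial.X - Polynomial.C cc * fC with hgdef
  have hgdeg : g.natDegree = d := by
    rw [hgdef, Polynomial.natDegree_sub_eq_right_of_natDegree_lt]
    · rw [Polynomial.natDegree_C_mul hcc, hfC]
    · rw [Polynomial.natDegree_C_mul hcc, hfC, Polynomial.natDegree_X]; omega
  have ha : g.coeff d ≠ 0 := by
    rw [hgdef, Polynomial.coeff_sub, Polynomial.coeff_C_mul, Polynomial.coeff_X,
      if_neg (by omega)]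
    have hlc : fC.coeff d = fC.leadingCoeff := by rw [Polynomial.leadingCoeff, hfC]
    rw [hlc]
    simpa using mul_ne_zero hcc (Polynomial.leadingCoeff_ne_zero.mpr hfC0)
  set cSol := {z : Fin N → ℂ | ∀ i,
      (α : ℂ) * ((N : ℂ)⁻¹ * ∑ j, z j) + (β : ℂ) * (q : ℂ) +
        cc * fC.eval (z i) - z i = 0} with hcSoldef
  have hSol : ∀ z : Fin N → ℂ, z ∈ cSol ↔
      ∀ i, g.eval (z i) = (β : ℂ) * (q : ℂ) + ∑ j, ((α : ℂ) * (N : ℂ)⁻¹) * z j := by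
    intro z
    simp only [hcSoldef, Set.mem_setOf_eq]
    apply forall_congr'
    intro i
    rw [hgdef, Polynomial.eval_sub, Polynomial.eval_mul, Polynomial.eval_C, Polynomial.eval_X]
    have hs : (∑ j, ((α : ℂ) * (N : ℂ)⁻¹) * z j) = (α : ℂ) * ((N : ℂ)⁻¹ * ∑ j, z j) := by
      rw [← Finset.mul_sum, mul_assoc]
    constructor
    · intro h; linear_combination -h - hs
    · intro h; linear_combination -h - hs
  have hkey : ∀ T : Finset (Fin N → ℂ), ↑T ⊆ cSol → T.card ≤ d ^ N := by
    intro T hTs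
    exact Stmt19Aux.key_card hN d hd g hgdeg ha _ _ T
      (fun z hz i => (hSol z).mp (hTs hz) i)
  have hfinC : cSol.Finite := by
    by_contra hinf
    obtain ⟨T, hTs, hTc⟩ := Set.Infinite.exists_subset_card_eq hinf (d ^ N + 1)
    have := hkey T hTs
    omega
  have hncard : cSol.ncard ≤ d ^ N := by
    rw [Set.ncard_eq_toFinset_card cSol hfinC]
    exact hkey hfinC.toFinset (by simp)
  have hevalC : ∀ x : ℝ, fC.eval ((x : ℝ) : ℂ) = ((f.eval x : ℝ) : ℂ) := by
    intro x
    rw [hfCdef, Polynomial.eval_map, ← Complex.coe_algebraMap]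
    exact Polynomial.eval₂_at_apply (algebraMap ℝ ℂ) x
  refine ⟨?_, hfinC, hncard⟩
  have hemb : {z : Fin N → ℝ | ∀ i,
      α * ((N : ℝ)⁻¹ * ∑ j, z j) + β * q + (1 - α - β) * f.eval (z i) - z i = 0}
      = (fun z : Fin N → ℝ => fun i => ((z i : ℝ) : ℂ)) ⁻¹' cSol := by
    ext z
    simp only [Set.mem_setOf_eq, Set.mem_preimage, hcSoldef]
    apply forall_congr'
    intro i
    have hcast : (α : ℂ) * ((N : ℂ)⁻¹ * ∑ j, ((z j : ℝ) : ℂ)) + (β : ℂ) * (q : ℂ) +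
        cc * fC.eval ((z i : ℝ) : ℂ) - ((z i : ℝ) : ℂ)
        = ((α * ((N : ℝ)⁻¹ * ∑ j, z j) + β * q + (1 - α - β) * f.eval (z i) - z i : ℝ) : ℂ) := by
      rw [hevalC, hccdef]
      push_cast
      ring
    rw [hcast, Complex.ofReal_eq_zero]
  rw [hemb]
  apply Set.Finite.preimage _ hfinC
  intro a _ b _ h
  funext i
  exact Complex.ofReal_injective (congrFun h i)

end
end
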